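/- arXiv:0812.4549 — 5 statements merged into one kernel-verified Lean document; each statement's English description precedes it below -/
import Mathlib

section
/- For λ = (λ₁,…,λₙ) ∈ ℝⁿ in the k-positive cone Γ_k (i.e. S_j(λ) > 0 for j = 1,…,k, where S_j is the normalized j-th elementary symmetric function), the partial derivative ∂S_k/∂λ_i is strictly positive for every i = 1,…,n. -/
section SymmHelpers
open Polynomial Multiset


lemma my_esymm_zero (s : Multiset ℝ) : s.esymm 0 = 1 := by
  simp [Multiset.esymm, Multiset.powersetCard_zero_left]

lemma my_esymm_cons (a : ℝ) (s : Multiset ℝ) (j : ℕ) :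
    (a ::ₘ s).esymm (j + 1) = s.esymm (j + 1) + a * s.esymm j := by
  simp only [Multiset.esymm, Multiset.powersetCard_cons, Multiset.map_add, Multiset.sum_add,
    Multiset.map_map]
  congr 1
  rw [← Multiset.sum_map_mul_left]
  congr 1
  apply Multiset.map_congr rfl
  intro x _
  simp [Multiset.prod_cons]

lemma my_esymm_eq_zero (s : Multiset ℝ) (j : ℕ) (h : Multiset.card s < j) : s.esymm j = 0 := by
  simp [Multiset.esymm, Multiset.powersetCard_eq_empty _ h]

noncomputable def Qp (s : Multiset ℝ) : ℝ[X] := (s.map (fun r => X + C r)).prod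

lemma Qp_monic (s : Multiset ℝ) : (Qp s).Monic := by
  apply monic_multiset_prod_of_monic
  intro a _
  exact monic_X_add_C a

lemma Qp_natDegree (s : Multiset ℝ) : (Qp s).natDegree = Multiset.card s := by
  rw [Qp, natDegree_multiset_prod_of_monic]
  · simp [Multiset.map_map, Function.comp_def]
  · intro f hf
    obtain ⟨a, _, rfl⟩ := Multiset.mem_map.1 hf
    exact monic_X_add_C a

lemma Qp_shift (s : Multiset ℝ) (t : ℝ) :
    Qp (s.map (· + t)) = taylor t (Qp s) := by
  rw [Qp, Qp, ← taylorAlgHom_apply, map_multiset_prod, Multiset.map_map, Multiset.map_map]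
  congr 1
  apply Multiset.map_congr rfl
  intro a _
  simp [taylorAlgHom_apply, taylor_apply, add_comm, add_assoc, add_left_comm]

lemma esymm_shift_eval (s : Multiset ℝ) (t : ℝ) (j : ℕ) (hj : j ≤ Multiset.card s) :
    (s.map (· + t)).esymm j = ((hasseDeriv (Multiset.card s - j)) (Qp s)).eval t := by
  have h1 : Multiset.card s - j ≤ Multiset.card (s.map (· + t)) := by
    rw [Multiset.card_map]; omega
  have := Multiset.prod_X_add_C_coeff (s.map (· + t)) h1
  rw [Multiset.card_map] at this
  have h2 : Multiset.card s - (Multiset.card s - j) = j := by omega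
  rw [h2] at this
  rw [← this, ← Qp, Qp_shift, taylor_coeff]

lemma hasse_coeff (s : Multiset ℝ) (j m : ℕ) (hj : j ≤ Multiset.card s) (hm : m ≤ j) :
    ((hasseDeriv (Multiset.card s - j)) (Qp s)).coeff m
      = ((m + (Multiset.card s - j)).choose (Multiset.card s - j)) * s.esymm (j - m) := by
  rw [hasseDeriv_coeff]
  congr 1
  have h1 : m + (Multiset.card s - j) ≤ Multiset.card s := by omega
  rw [Qp, Multiset.prod_X_add_C_coeff s h1]
  congr 1
  omega

lemma esymm_ray (s : Multiset ℝ) (t : ℝ) (j : ℕ) (hj : j ≤ Multiset.card s) (ht : 0 ≤ t)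
    (hpos : ∀ m, m ≤ j → 0 ≤ s.esymm m) :
    s.esymm j ≤ (s.map (· + t)).esymm j := by
  rw [esymm_shift_eval s t j hj]
  have hdeg : ((hasseDeriv (Multiset.card s - j)) (Qp s)).natDegree < j + 1 := by
    have := natDegree_hasseDeriv_le (Qp s) (Multiset.card s - j)
    rw [Qp_natDegree] at this
    omega
  rw [eval_eq_sum_range' hdeg]
  rw [Finset.sum_range_succ']
  have h0 : ((hasseDeriv (Multiset.card s - j)) (Qp s)).coeff 0 * t ^ 0 = s.esymm j := by
    rw [hasse_coeff s j 0 hj (by omega)]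
    simp
  rw [h0]
  have : 0 ≤ ∑ i ∈ Finset.range j,
      ((hasseDeriv (Multiset.card s - j)) (Qp s)).coeff (i + 1) * t ^ (i + 1) := by
    apply Finset.sum_nonneg
    intro i hi
    rw [Finset.mem_range] at hi
    rw [hasse_coeff s j (i + 1) hj (by omega)]
    have := hpos (j - (i+1)) (by omega)
    positivity
  linarith

lemma Qp_roots_card (s : Multiset ℝ) : Multiset.card (Qp s).roots = Multiset.card s := by
  have : Qp s = ((s.map (fun a => -a)).map (fun a => X - C a)).prod := by
    rw [Qp, Multiset.map_map]
    apply congrArg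
    apply Multiset.map_congr rfl
    intro a _
    simp [sub_eq_add_neg]
  rw [this, roots_multiset_prod_X_sub_C, Multiset.card_map]

lemma card_roots_iterate (p : ℝ[X]) (m : ℕ) :
    Multiset.card p.roots ≤ Multiset.card ((derivative)^[m] p).roots + m := by
  induction m generalizing p with
  | zero => simp
  | succ m ih =>
    calc Multiset.card p.roots ≤ Multiset.card (derivative p).roots + 1 :=
          p.card_roots_le_derivative
    _ ≤ (Multiset.card ((derivative)^[m] (derivative p)).roots + m) + 1 := by
          exact Nat.add_le_add_right (ih (derivative p)) 1
    _ = Multiset.card ((derivative)^[m+1] p).roots + (m+1) := by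
          rw [Function.iterate_succ_apply]; omega

-- coefficients of products of (1 + u X)
lemma lin_prod_coeff (b : Multiset ℝ) :
    ((b.map (fun u => 1 + C u * X)).prod.coeff 0 = 1)
    ∧ ((b.map (fun u => 1 + C u * X)).prod.coeff 1 = b.sum)
    ∧ ((b.map (fun u => 1 + C u * X)).prod.coeff 2
        = (b.sum ^ 2 - (b.map (fun u => u ^ 2)).sum) / 2) := by
  induction b using Multiset.induction with
  | empty => simp [coeff_one]
  | cons u b ih =>
    obtain ⟨h0, h1, h2⟩ := ih
    rw [Multiset.map_cons, Multiset.prod_cons]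
    set q := (b.map (fun u => 1 + C u * X)).prod with hq
    have key : ∀ n : ℕ, ((1 + C u * X) * q).coeff (n + 1)
        = q.coeff (n + 1) + u * q.coeff n := by
      intro n
      rw [add_mul, one_mul, coeff_add, mul_assoc, coeff_C_mul, coeff_X_mul]
    have key0 : ((1 + C u * X) * q).coeff 0 = q.coeff 0 := by
      rw [add_mul, one_mul, coeff_add, mul_assoc, mul_coeff_zero]
      simp
    refine ⟨by rw [key0, h0], ?_, ?_⟩
    · rw [show (1:ℕ) = 0 + 1 from rfl, key, h1, h0, Multiset.sum_cons]; ring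
    · rw [show (2:ℕ) = 1 + 1 from rfl, key, h1, h2, Multiset.sum_cons, Multiset.map_cons,
        Multiset.sum_cons]
      ring

lemma newton_at_zero (s : Multiset ℝ) (k : ℕ) (h2 : 2 ≤ k) (hk : k ≤ Multiset.card s)
    (hm1 : s.esymm (k - 1) = 0) (hm2 : 0 < s.esymm (k - 2)) : s.esymm k ≤ 0 := by
  by_contra hpos
  push_neg at hpos
  set c := Multiset.card s with hc
  set D := (derivative)^[c - k] (Qp s) with hD
  -- coefficients of D
  have hcoeff : ∀ m : ℕ, m ≤ k →
      D.coeff m = ((m + (c - k)).descFactorial (c - k) : ℝ) * s.esymm (k - m) := by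
    intro m hm
    rw [hD, coeff_iterate_derivative, nsmul_eq_mul]
    congr 1
    rw [Qp, Multiset.prod_X_add_C_coeff s (show m + (c - k) ≤ Multiset.card s by omega)]
    congr 1
    omega
  have hd0 : (0:ℝ) < ((0 + (c - k)).descFactorial (c - k) : ℝ) := by
    have : (0 + (c-k)).descFactorial (c-k) ≠ 0 := by
      rw [Ne, Nat.descFactorial_eq_zero_iff_lt]; omega
    positivity
  have hd2 : (0:ℝ) < ((2 + (c - k)).descFactorial (c - k) : ℝ) := by
    have : (2 + (c-k)).descFactorial (c-k) ≠ 0 := by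
      rw [Ne, Nat.descFactorial_eq_zero_iff_lt]; omega
    positivity
  have hD0 : 0 < D.coeff 0 := by
    rw [hcoeff 0 (by omega)]
    simp only [Nat.sub_zero]
    exact mul_pos hd0 hpos
  have hD1 : D.coeff 1 = 0 := by rw [hcoeff 1 (by omega), hm1, mul_zero]
  have hD2 : 0 < D.coeff 2 := by
    rw [hcoeff 2 h2]
    exact mul_pos hd2 hm2
  -- root count
  have hDne : D ≠ 0 := fun h => by
    rw [h, coeff_zero] at hD0; exact lt_irrefl 0 hD0
  have hcard1 : k ≤ Multiset.card D.roots := by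
    have := card_roots_iterate (Qp s) (c - k)
    rw [Qp_roots_card, ← hc, ← hD] at this
    omega
  have hdeg : D.natDegree ≤ k := by
    have := natDegree_iterate_derivative (Qp s) (c - k)
    rw [Qp_natDegree, ← hc, ← hD] at this
    omega
  have hcard : Multiset.card D.roots = D.natDegree := le_antisymm (card_roots' D)
    (le_trans (by omega : D.natDegree ≤ k) hcard1)
  have hdegk : D.natDegree = k := le_antisymm hdeg (hcard ▸ hcard1)
  -- roots nonzero
  have hroots_ne : ∀ a ∈ D.roots, a ≠ 0 := by
    intro a ha h0
    rw [h0] at ha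
    have : D.eval 0 = 0 := (isRoot_of_mem_roots ha)
    rw [← coeff_zero_eq_eval_zero] at this
    rw [this] at hD0; exact lt_irrefl 0 hD0
  -- factorization
  have hfact := C_leadingCoeff_mul_prod_multiset_X_sub_C (p := D) hcard
  set b : Multiset ℝ := D.roots.map (fun a => -a⁻¹) with hb
  have hrw : D.roots.map (fun a => X - C a)
      = D.roots.map (fun a => C (-a) * (1 + C (-a⁻¹) * X)) := by
    apply Multiset.map_congr rfl
    intro a ha
    have hane := hroots_ne a ha
    have : C (-a) * (1 + C (-a⁻¹) * X) = X - C a := by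
      rw [mul_add, mul_one, ← mul_assoc, ← C_mul,
        show -a * -a⁻¹ = a * a⁻¹ by ring, mul_inv_cancel₀ hane, C_1, one_mul, C_neg]
      ring
    exact this.symm
  set A : ℝ := D.leadingCoeff * (D.roots.map (fun a => -a)).prod with hA
  have hDfact : D = C A * (b.map (fun u => 1 + C u * X)).prod := by
    rw [← hfact, hrw, Multiset.prod_map_mul]
    rw [hA, map_mul, ← mul_assoc]
    congr 2
    · rw [map_multiset_prod (C : ℝ →+* ℝ[X]), Multiset.map_map]
      rfl
    · rw [hb, Multiset.map_map]
      rfl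
  obtain ⟨hP0, hP1, hP2⟩ := lin_prod_coeff b
  have hc0 : D.coeff 0 = A := by rw [hDfact, coeff_C_mul, hP0, mul_one]
  have hc1 : D.coeff 1 = A * b.sum := by rw [hDfact, coeff_C_mul, hP1]
  have hc2 : D.coeff 2 = A * ((b.sum ^ 2 - (b.map (fun u => u ^ 2)).sum) / 2) := by
    rw [hDfact, coeff_C_mul, hP2]
  have hApos : 0 < A := hc0 ▸ hD0
  have hbsum : b.sum = 0 := by
    have := hc1.symm.trans hD1
    rcases mul_eq_zero.1 this with h | h
    · exact absurd h (ne_of_gt hApos)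
    · exact h
  -- sum of squares positive
  have hsq : 0 < (b.map (fun u => u ^ 2)).sum := by
    have hbne : b ≠ 0 := by
      rw [hb, Ne, Multiset.map_eq_zero]
      intro h
      rw [h] at hcard1
      simp at hcard1
      omega
    obtain ⟨u, hu⟩ := Multiset.exists_mem_of_ne_zero hbne
    have hune : u ≠ 0 := by
      obtain ⟨a, ha, rfl⟩ := Multiset.mem_map.1 hu
      simpa using inv_ne_zero (hroots_ne a ha)
    have hmem : u ^ 2 ∈ b.map (fun u => u ^ 2) := Multiset.mem_map_of_mem _ hu
    calc (0:ℝ) < u ^ 2 := by positivity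
    _ ≤ (b.map (fun u => u ^ 2)).sum := by
        apply Multiset.single_le_sum
        · intro x hx
          obtain ⟨y, _, rfl⟩ := Multiset.mem_map.1 hx
          positivity
        · exact hmem
  have : D.coeff 2 < 0 := by
    rw [hc2, hbsum]
    have : (0:ℝ)^2 - (b.map (fun u => u ^ 2)).sum < 0 := by simpa using hsq
    have h5 : ((0:ℝ) ^ 2 - (Multiset.map (fun u => u ^ 2) b).sum) / 2 < 0 := by linarith
    exact mul_neg_of_pos_of_neg hApos h5
  linarith

lemma key : ∀ k : ℕ, 1 ≤ k → ∀ (a : ℝ) (s : Multiset ℝ), k ≤ Multiset.card s + 1 →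
    (∀ j, 1 ≤ j → j ≤ k → 0 < (a ::ₘ s).esymm j) → 0 < s.esymm (k - 1) := by
  intro k
  induction k using Nat.strong_induction_on with
  | _ k IH =>
    intro hk1 a s hks hG
    rcases Nat.lt_or_ge k 2 with hk2 | hk2
    · -- k = 1
      have : k = 1 := by omega
      subst this
      simpa [my_esymm_zero] using (by norm_num : (0:ℝ) < 1)
    -- k ≥ 2
    have hcard : k - 1 ≤ Multiset.card s := by omega
    -- ray positivity of the full multiset
    have hray : ∀ t : ℝ, 0 ≤ t → ∀ j, 1 ≤ j → j ≤ k →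
        0 < (((a + t) ::ₘ s.map (· + t))).esymm j := by
      intro t ht j hj1 hjk
      have h1 : j ≤ Multiset.card (a ::ₘ s) := by
        rw [Multiset.card_cons]; omega
      have h2 : ∀ m, m ≤ j → 0 ≤ (a ::ₘ s).esymm m := by
        intro m hm
        rcases Nat.eq_zero_or_pos m with rfl | hm1
        · rw [my_esymm_zero]; norm_num
        · exact le_of_lt (hG m hm1 (by omega))
      have := esymm_ray (a ::ₘ s) t j h1 ht h2
      have h3 : 0 < ((a ::ₘ s).map (· + t)).esymm j := lt_of_lt_of_le (hG j hj1 hjk) this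
      rwa [Multiset.map_cons] at h3
    -- induction: lower esymm of shifted s are positive
    have hlow : ∀ t : ℝ, 0 ≤ t → ∀ m, m ≤ k - 2 → 0 < (s.map (· + t)).esymm m := by
      intro t ht m hm
      rcases Nat.eq_zero_or_pos m with rfl | hm1
      · rw [my_esymm_zero]; norm_num
      · have h4 : m + 1 < k := by omega
        have h5 : m + 1 ≤ Multiset.card (s.map (· + t)) + 1 := by
          rw [Multiset.card_map]; omega
        have := IH (m + 1) h4 (by omega) (a + t) (s.map (· + t)) h5
          (fun j hj1 hj2 => hray t ht j hj1 (by omega))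
        simpa using this
    by_contra hneg
    push_neg at hneg
    -- the polynomial whose evals are shifted esymm (k-1)
    set H := (hasseDeriv (Multiset.card s - (k - 1))) (Qp s) with hH
    have heval : ∀ t : ℝ, (s.map (· + t)).esymm (k - 1) = H.eval t :=
      fun t => esymm_shift_eval s t (k - 1) hcard
    have heval0 : H.eval 0 ≤ 0 := by
      have := heval 0
      simp only [add_zero] at this
      rw [Multiset.map_id'] at this
      rw [← this]
      exact hneg
    -- H has positive leading coefficient and degree k-1 ≥ 1
    have hcoefftop : 0 < H.coeff (k - 1) := by
      rw [hH, hasse_coeff s (k - 1) (k - 1) hcard le_rfl]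
      rw [Nat.sub_self, my_esymm_zero, mul_one]
      exact_mod_cast Nat.choose_pos (Nat.le_add_left _ _)
    have hdegle : H.natDegree ≤ k - 1 := by
      have := natDegree_hasseDeriv_le (Qp s) (Multiset.card s - (k - 1))
      rw [Qp_natDegree] at this
      rw [hH]
      omega
    have hdegH : H.natDegree = k - 1 :=
      le_antisymm hdegle (le_natDegree_of_ne_zero (ne_of_gt hcoefftop))
    have hlead : 0 < H.leadingCoeff := by
      rw [Polynomial.leadingCoeff, hdegH]; exact hcoefftop
    have htop : Filter.Tendsto (fun x => H.eval x) Filter.atTop Filter.atTop := by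
      apply Polynomial.tendsto_atTop_of_leadingCoeff_nonneg
      · rw [← Polynomial.natDegree_pos_iff_degree_pos, hdegH]; omega
      · exact le_of_lt hlead
    obtain ⟨T, hT⟩ := ((htop.eventually_ge_atTop 1).and (Filter.eventually_ge_atTop 0)).exists
    obtain ⟨hT1, hT0⟩ := hT
    -- IVT
    have hcont : ContinuousOn (fun x => H.eval x) (Set.Icc 0 T) :=
      (Polynomial.continuous H).continuousOn
    have hmem : (0:ℝ) ∈ Set.Icc (H.eval 0) (H.eval T) := ⟨heval0, by linarith⟩
    obtain ⟨t₀, ht₀mem, ht₀⟩ := intermediate_value_Icc hT0 hcont hmem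
    have ht₀0 : 0 ≤ t₀ := ht₀mem.1
    set s' := s.map (· + t₀) with hs'
    have hz : s'.esymm (k - 1) = 0 := by rw [hs', heval t₀]; exact ht₀
    have hlow' : ∀ m, m ≤ k - 2 → 0 < s'.esymm m := fun m hm => hlow t₀ ht₀0 m hm
    have hconsk : 0 < ((a + t₀) ::ₘ s').esymm k := hray t₀ ht₀0 k (by omega) le_rfl
    have hsk : 0 < s'.esymm k := by
      have hk' : k = (k - 1) + 1 := by omega
      rw [hk', my_esymm_cons (a + t₀) s' (k - 1), ← hk'] at hconsk
      rwa [hz, mul_zero, add_zero] at hconsk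
    have hcards' : Multiset.card s' = Multiset.card s := Multiset.card_map _ _
    rcases Nat.lt_or_ge (Multiset.card s) k with hlt | hge
    · rw [my_esymm_eq_zero s' k (by omega)] at hsk
      exact lt_irrefl 0 hsk
    · have := newton_at_zero s' k hk2 (by omega) hz (hlow' (k - 2) le_rfl)
      linarith

end SymmHelpers

/-- Normalized `k`-th elementary symmetric function on `ℝⁿ`. -/
noncomputable def S (n k : ℕ) (x : Fin n → ℝ) : ℝ :=
  (∑ t ∈ Finset.univ.powersetCard k, ∏ i ∈ t, x i) / (n.choose k : ℝ)

/-- The `k`-positive (Gårding) cone `Γ_k ⊆ ℝⁿ`. -/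
def Gamma (n k : ℕ) : Set (Fin n → ℝ) :=
  {x | ∀ j, 1 ≤ j → j ≤ k → 0 < S n j x}

theorem partial_Sk_pos (n k : ℕ) (hk1 : 1 ≤ k) (hkn : k ≤ n)
    (lam : Fin n → ℝ) (hlam : lam ∈ Gamma n k) (i : Fin n) :
    0 < fderiv ℝ (S n k) lam (Pi.single i 1) := by
  classical
  set L : (Fin n → ℝ) →L[ℝ] ℝ :=
    (↑(n.choose k) : ℝ)⁻¹ • ∑ t ∈ Finset.univ.powersetCard k,
      ∑ j ∈ t, (∏ l ∈ t.erase j, lam l) • (ContinuousLinearMap.proj j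
        : (Fin n → ℝ) →L[ℝ] ℝ) with hL
  have hsum : HasFDerivAt (fun x : Fin n → ℝ => ∑ t ∈ Finset.univ.powersetCard k, ∏ i ∈ t, x i)
      (∑ t ∈ Finset.univ.powersetCard k,
        ∑ j ∈ t, (∏ l ∈ t.erase j, lam l) • (ContinuousLinearMap.proj j
          : (Fin n → ℝ) →L[ℝ] ℝ)) lam := by
    apply HasFDerivAt.fun_sum
    intro t _
    apply HasFDerivAt.finset_prod
    intro j _
    have := (ContinuousLinearMap.proj (R := ℝ) (φ := fun _ : Fin n => ℝ) j).hasFDerivAt (x := lam)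
    exact this
  have hS : HasFDerivAt (S n k) L lam := by
    have := hsum.mul_const ((↑(n.choose k) : ℝ)⁻¹)
    have heq : (fun x : Fin n → ℝ =>
        (∑ t ∈ Finset.univ.powersetCard k, ∏ i ∈ t, x i) * (↑(n.choose k) : ℝ)⁻¹) = S n k := by
      funext x
      rw [S, div_eq_mul_inv]
    rw [heq] at this
    rwa [hL]
  rw [hS.fderiv]
  -- compute L (Pi.single i 1)
  have hval : L (Pi.single i 1)
      = (↑(n.choose k) : ℝ)⁻¹ * ∑ t ∈ Finset.univ.powersetCard k,
          (if i ∈ t then ∏ l ∈ t.erase i, lam l else 0) := by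
    rw [hL]
    rw [ContinuousLinearMap.smul_apply, ContinuousLinearMap.sum_apply]
    rw [smul_eq_mul]
    congr 1
    apply Finset.sum_congr rfl
    intro t _
    rw [ContinuousLinearMap.sum_apply]
    rw [← Finset.sum_ite_eq' t i (fun j => ∏ l ∈ t.erase j, lam l)]
    apply Finset.sum_congr rfl
    intro j _
    rw [ContinuousLinearMap.smul_apply, ContinuousLinearMap.proj_apply, smul_eq_mul,
      Pi.single_apply]
    by_cases h : j = i <;> simp [h]
  rw [hval]
  have hbij : ∑ t ∈ Finset.univ.powersetCard k, (if i ∈ t then ∏ l ∈ t.erase i, lam l else 0)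
      = ∑ u ∈ (Finset.univ.erase i).powersetCard (k-1), ∏ l ∈ u, lam l := by
    rw [← Finset.sum_filter]
    apply Finset.sum_nbij' (fun t => t.erase i) (fun u => insert i u)
    · intro t ht
      rw [Finset.mem_filter, Finset.mem_powersetCard] at ht
      rw [Finset.mem_powersetCard]
      exact ⟨Finset.erase_subset_erase i ht.1.1, by rw [Finset.card_erase_of_mem ht.2, ht.1.2]⟩
    · intro u hu
      rw [Finset.mem_powersetCard] at hu
      have hiu : i ∉ u := fun h => (Finset.ne_of_mem_erase (hu.1 h)) rfl
      rw [Finset.mem_filter, Finset.mem_powersetCard]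
      refine ⟨⟨Finset.subset_univ _, ?_⟩, Finset.mem_insert_self i u⟩
      rw [Finset.card_insert_of_notMem hiu, hu.2]
      omega
    · intro t ht
      rw [Finset.mem_filter] at ht
      exact Finset.insert_erase ht.2
    · intro u hu
      rw [Finset.mem_powersetCard] at hu
      have hiu : i ∉ u := fun h => (Finset.ne_of_mem_erase (hu.1 h)) rfl
      exact Finset.erase_insert hiu
    · intro t _
      rfl
  rw [hbij]
  set s : Multiset ℝ := (Finset.univ.erase i).val.map lam with hs
  have hesymm : ∑ u ∈ (Finset.univ.erase i).powersetCard (k-1), ∏ l ∈ u, lam l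
      = s.esymm (k-1) := (Finset.esymm_map_val lam _ (k-1)).symm
  rw [hesymm]
  have hcons : lam i ::ₘ s = Finset.univ.val.map lam := by
    rw [hs, Finset.erase_val, ← Multiset.map_cons,
      Multiset.cons_erase (by exact Finset.mem_univ_val i)]
  have hcards : Multiset.card s = n - 1 := by
    rw [hs, Multiset.card_map, ← Finset.card_def, Finset.card_erase_of_mem (Finset.mem_univ i),
      Finset.card_univ, Fintype.card_fin]
  have hGam : ∀ j, 1 ≤ j → j ≤ k → 0 < (lam i ::ₘ s).esymm j := by
    intro j hj1 hj2
    rw [hcons]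
    have h1 : (Finset.univ.val.map lam).esymm j
        = ∑ t ∈ Finset.univ.powersetCard j, ∏ l ∈ t, lam l := by
      rw [Finset.esymm_map_val]
    rw [h1]
    have hch : (0:ℝ) < (n.choose j : ℝ) := by
      exact_mod_cast Nat.choose_pos (le_trans hj2 hkn)
    have hj := hlam j hj1 hj2
    rw [S] at hj
    have := mul_pos hj hch
    rwa [div_mul_cancel₀ _ (ne_of_gt hch)] at this
  have hkey := key k hk1 (lam i) s (by omega) hGam
  have hchk : (0:ℝ) < (n.choose k : ℝ) := by
    exact_mod_cast Nat.choose_pos hkn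
  exact mul_pos (inv_pos.2 hchk) hkey
end

section
/- (Maclaurin inequalities) If λ ∈ Γ_k (i.e. S_j(λ) > 0 for j = 1,…,k), then 0 < S_k(λ)^{1/k} ≤ S_{k-1}(λ)^{1/(k-1)} ≤ ⋯ ≤ S_2(λ)^{1/2} ≤ S_1(λ). -/
open Finset Polynomial

namespace MacAux

/-- unnormalized elementary symmetric sum -/
noncomputable def Es (n r : ℕ) (x : Fin n → ℝ) : ℝ :=
  ∑ A ∈ Finset.univ.powersetCard r, ∏ i ∈ A, x i

lemma Es_eq (n r : ℕ) (x : Fin n → ℝ) :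
    (Finset.univ.val.map x).esymm r = Es n r x := Finset.esymm_map_val x univ r

lemma card_univ_map {n : ℕ} (x : Fin n → ℝ) :
    Multiset.card (Finset.univ.val.map x) = n := by simp

lemma exists_fun (M : ℕ) (s : Multiset ℝ) (hs : Multiset.card s = M) :
    ∃ x : Fin M → ℝ, Finset.univ.val.map x = s := by
  obtain ⟨l, rfl⟩ : ∃ l : List ℝ, (↑l : Multiset ℝ) = s := ⟨s.toList, s.coe_toList⟩
  have hl : l.length = M := by simpa using hs
  subst hl
  exact ⟨l.get, by rw [Fin.univ_val_map, List.ofFn_get]⟩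

lemma pair_compl_prod {M : ℕ} (x : Fin M → ℝ) {i j : Fin M} (hij : i ≠ j) :
    (∏ a ∈ ({i, j}ᶜ : Finset (Fin M)), x a) * (∏ a, x a)
      = (∏ a ∈ ({i}ᶜ : Finset (Fin M)), x a) * (∏ a ∈ ({j}ᶜ : Finset (Fin M)), x a) := by
  have hji : j ∈ ({i}ᶜ : Finset (Fin M)) := by simp [hij.symm]
  have hii : i ∈ ({j}ᶜ : Finset (Fin M)) := by simp [hij]
  have e1 : ({i}ᶜ : Finset (Fin M)).erase j = {i, j}ᶜ := by
    ext a; simp only [mem_erase, mem_compl, mem_singleton, mem_insert]; tauto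
  have e2 : ({j}ᶜ : Finset (Fin M)).erase i = {i, j}ᶜ := by
    ext a; simp only [mem_erase, mem_compl, mem_singleton, mem_insert]; tauto
  have z1 : (∏ a ∈ ({i}ᶜ : Finset (Fin M)), x a)
      = x j * ∏ a ∈ ({i, j}ᶜ : Finset (Fin M)), x a := by
    rw [← Finset.mul_prod_erase _ x hji, e1]
  have z2 : (∏ a ∈ ({j}ᶜ : Finset (Fin M)), x a)
      = x i * ∏ a ∈ ({i, j}ᶜ : Finset (Fin M)), x a := by
    rw [← Finset.mul_prod_erase _ x hii, e2]
  have u : (∏ a, x a) = (x i * x j) * ∏ a ∈ ({i, j}ᶜ : Finset (Fin M)), x a := by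
    rw [← Finset.prod_mul_prod_compl ({i, j} : Finset (Fin M)) x, Finset.prod_pair hij]
  rw [z1, z2, u]; ring

lemma base_fn (M : ℕ) (hM : 2 ≤ M) (x : Fin M → ℝ) :
    (M : ℝ)^2 * (Es M (M-2) x * Es M M x) ≤ (M.choose 2 : ℝ) * (Es M (M-1) x)^2 := by
  set z : Fin M → ℝ := fun i => ∏ a ∈ ({i}ᶜ : Finset (Fin M)), x a with hzdef
  have hA : Es M (M-1) x = ∑ i, z i := by
    refine (Finset.sum_bij (fun (i : Fin M) _ => ({i}ᶜ : Finset (Fin M))) ?_ ?_ ?_ ?_).symm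
    · intro i _
      rw [mem_powersetCard_univ, card_compl, card_singleton, Fintype.card_fin]
    · intro a _ b _ h
      have := congrArg (·ᶜ) h
      simpa using this
    · intro A hA
      rw [mem_powersetCard_univ] at hA
      have hc : Aᶜ.card = 1 := by
        rw [card_compl, hA, Fintype.card_fin]; omega
      obtain ⟨a, ha⟩ := Finset.card_eq_one.mp hc
      exact ⟨a, mem_univ a, by show ({a}ᶜ : Finset (Fin M)) = A; rw [← ha, compl_compl]⟩
    · intro i _; rfl
  have hMM : Es M M x = ∏ a, x a := by
    rw [Es]
    have : (Finset.univ : Finset (Fin M)).powersetCard M = {univ} := by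
      simpa using Finset.powersetCard_self (univ : Finset (Fin M))
    rw [this, Finset.sum_singleton]
  have hB : 2 * (Es M (M-2) x * Es M M x) = (∑ i, z i)^2 - ∑ i, (z i)^2 := by
    -- off-diagonal sum equals square minus diagonal
    have h2 : ∑ p ∈ (univ : Finset (Fin M)).offDiag, z p.1 * z p.2
        = (∑ i, z i)^2 - ∑ i, (z i)^2 := by
      have hsq : (∑ i, z i)^2 = ∑ p ∈ (univ ×ˢ univ : Finset (Fin M × Fin M)), z p.1 * z p.2 := by
        rw [sq, Finset.sum_mul_sum]
        rw [Finset.sum_product]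
      have hsplit := Finset.sum_filter_add_sum_filter_not
        (univ ×ˢ univ : Finset (Fin M × Fin M)) (fun p => p.1 = p.2) (fun p => z p.1 * z p.2)
      have hdiag : ∑ p ∈ (univ ×ˢ univ : Finset (Fin M × Fin M)) with p.1 = p.2, z p.1 * z p.2
          = ∑ i, (z i)^2 := by
        refine Finset.sum_bij (fun (p : Fin M × Fin M) _ => p.1) ?_ ?_ ?_ ?_
        · intro p _; exact mem_univ _
        · intro a ha b hb h
          change a.1 = b.1 at h
          simp only [mem_filter, mem_product] at ha hb
          exact Prod.ext_iff.mpr ⟨h, by rw [← ha.2, ← hb.2, h]⟩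
        · intro i _; exact ⟨(i, i), by simp, rfl⟩
        · intro p hp
          simp only [mem_filter] at hp
          show z p.1 * z p.2 = (z p.1)^2
          rw [← hp.2, sq]
      have hoff : ((univ ×ˢ univ : Finset (Fin M × Fin M)).filter (fun p => ¬ p.1 = p.2))
          = (univ : Finset (Fin M)).offDiag := by
        ext p; simp [Finset.mem_offDiag]
      rw [hoff, hdiag] at hsplit
      rw [hsq]; linarith
    -- compress via the 2-to-1 map to complements of pairs
    have h3 : ∑ p ∈ (univ : Finset (Fin M)).offDiag, z p.1 * z p.2
        = ∑ p ∈ (univ : Finset (Fin M)).offDiag,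
            (fun A : Finset (Fin M) => (∏ a ∈ A, x a) * ∏ a, x a) ({p.1, p.2}ᶜ : Finset (Fin M)) := by
      refine Finset.sum_congr rfl fun p hp => ?_
      have hne : p.1 ≠ p.2 := (Finset.mem_offDiag.mp hp).2.2
      exact (pair_compl_prod x hne).symm
    have h4 := Finset.sum_comp (s := (univ : Finset (Fin M)).offDiag)
      (fun A : Finset (Fin M) => (∏ a ∈ A, x a) * ∏ a, x a)
      (fun p : Fin M × Fin M => ({p.1, p.2}ᶜ : Finset (Fin M)))
    have himg : ((univ : Finset (Fin M)).offDiag.image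
        (fun p : Fin M × Fin M => ({p.1, p.2}ᶜ : Finset (Fin M))))
        = univ.powersetCard (M-2) := by
      ext A
      simp only [mem_image, mem_powersetCard_univ]
      constructor
      · rintro ⟨p, hp, rfl⟩
        have hne : p.1 ≠ p.2 := (Finset.mem_offDiag.mp hp).2.2
        rw [card_compl, card_pair hne, Fintype.card_fin]
      · intro hA
        have hc : Aᶜ.card = 2 := by
          rw [card_compl, hA, Fintype.card_fin]; omega
        obtain ⟨i, j, hij, hAc⟩ := Finset.card_eq_two.mp hc
        exact ⟨(i, j), Finset.mem_offDiag.mpr ⟨mem_univ _, mem_univ _, hij⟩,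
          by rw [show ({(i,j).1, (i,j).2} : Finset (Fin M)) = {i,j} from rfl, ← hAc, compl_compl]⟩
    have hfib : ∀ A ∈ univ.powersetCard (M-2),
        ((univ : Finset (Fin M)).offDiag.filter
          (fun p : Fin M × Fin M => ({p.1, p.2}ᶜ : Finset (Fin M)) = A)).card = 2 := by
      intro A hA
      rw [mem_powersetCard_univ] at hA
      have hc : Aᶜ.card = 2 := by
        rw [card_compl, hA, Fintype.card_fin]; omega
      obtain ⟨i, j, hij, hAc⟩ := Finset.card_eq_two.mp hc
      have hset : ((univ : Finset (Fin M)).offDiag.filter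
          (fun p : Fin M × Fin M => ({p.1, p.2}ᶜ : Finset (Fin M)) = A))
          = {(i, j), (j, i)} := by
        ext p
        simp only [mem_filter, Finset.mem_offDiag, mem_univ, true_and, mem_insert, mem_singleton]
        constructor
        · rintro ⟨hne, hcomp⟩
          have hpair : ({p.1, p.2} : Finset (Fin M)) = {i, j} := by
            have := congrArg (·ᶜ) hcomp
            simp only [compl_compl] at this
            rw [this, hAc]
          have h1 : p.1 ∈ ({i, j} : Finset (Fin M)) := by rw [← hpair]; simp
          have h2 : p.2 ∈ ({i, j} : Finset (Fin M)) := by rw [← hpair]; simp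
          simp only [mem_insert, mem_singleton] at h1 h2
          rcases h1 with h1 | h1 <;> rcases h2 with h2 | h2
          · exact absurd (h1.trans h2.symm) hne
          · left; exact Prod.ext_iff.mpr ⟨h1, h2⟩
          · right; exact Prod.ext_iff.mpr ⟨h1, h2⟩
          · exact absurd (h1.trans h2.symm) hne
        · rintro (rfl | rfl)
          · exact ⟨hij, by rw [show ({(i,j).1, (i,j).2} : Finset (Fin M)) = {i,j} from rfl,
              ← hAc, compl_compl]⟩
          · refine ⟨hij.symm, ?_⟩
            rw [show ({(j,i).1, (j,i).2} : Finset (Fin M)) = {j,i} from rfl, Finset.pair_comm,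
              ← hAc, compl_compl]
      rw [hset, card_insert_of_notMem (by simp [Prod.ext_iff, hij]), card_singleton]
    rw [← h2, h3, h4, himg]
    rw [Finset.sum_congr rfl (fun A hA => by rw [hfib A hA])]
    simp only [nsmul_eq_mul, Nat.cast_ofNat, ← Finset.mul_sum]
    rw [← Finset.sum_mul, ← hMM]
    simp only [Es]
  have hCS : (∑ i, z i)^2 ≤ (M : ℝ) * ∑ i, (z i)^2 := by
    have := sq_sum_le_card_mul_sum_sq (s := (univ : Finset (Fin M))) (f := z)
    simpa using this
  have hch : (M.choose 2 : ℝ) = M * (M - 1) / 2 := Nat.cast_choose_two (K := ℝ) M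
  have hM' : (2 : ℝ) ≤ M := by exact_mod_cast hM
  rw [hA, hch]
  nlinarith [hB, hCS, sq_nonneg (∑ i, z i), mul_le_mul_of_nonneg_left hCS (by linarith : (0:ℝ) ≤ (M:ℝ))]

lemma exists_deriv (m : ℕ) (s : Multiset ℝ) (hs : Multiset.card s = m + 1) :
    ∃ t : Multiset ℝ, Multiset.card t = m ∧
      ∀ j ≤ m, ((m : ℝ) + 1) * t.esymm j = ((m : ℝ) + 1 - j) * s.esymm j := by
  set p : ℝ[X] := (s.map fun a => X - C a).prod with hp
  have hmonic : p.Monic := monic_multiset_prod_of_monic _ _ fun a _ => monic_X_sub_C a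
  have hdeg : p.natDegree = m + 1 := by
    rw [hp, natDegree_multiset_prod_X_sub_C_eq_card, hs]
  have hroots : p.roots = s := roots_multiset_prod_X_sub_C s
  set q : ℝ[X] := derivative p with hq
  have hqd : q.natDegree ≤ m := by
    have := natDegree_derivative_le p
    rw [← hq, hdeg] at this
    omega
  have hq2 : m ≤ Multiset.card q.roots := by
    have := p.card_roots_le_derivative
    rw [hroots, hs, ← hq] at this
    omega
  have hqcard : Multiset.card q.roots = m :=
    le_antisymm (le_trans (card_roots' q) hqd) hq2
  have hqdeg : q.natDegree = m :=
    le_antisymm hqd (hqcard ▸ card_roots' q)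
  have hsplit : q = C q.leadingCoeff * (q.roots.map fun a => X - C a).prod :=
    (C_leadingCoeff_mul_prod_multiset_X_sub_C (by rw [hqcard, hqdeg])).symm
  have hlead : q.leadingCoeff = (m : ℝ) + 1 := by
    have h1 : q.leadingCoeff = q.coeff m := by rw [Polynomial.leadingCoeff, hqdeg]
    rw [h1, hq, coeff_derivative]
    have : p.coeff (m + 1) = 1 := by
      have := hmonic.coeff_natDegree
      rwa [hdeg] at this
    rw [this, one_mul]
  refine ⟨q.roots, hqcard, fun j hj => ?_⟩
  have e1 : q.coeff (m - j) = ((m : ℝ) + 1) * ((-1)^j * q.roots.esymm j) := by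
    conv_lhs => rw [hsplit]
    rw [coeff_C_mul, Multiset.prod_X_sub_C_coeff _ (by rw [hqcard]; omega), hqcard,
      show m - (m - j) = j by omega, hlead]
  have e2 : q.coeff (m - j) = ((m : ℝ) + 1 - j) * ((-1)^j * s.esymm j) := by
    rw [hq, coeff_derivative, hp,
      Multiset.prod_X_sub_C_coeff s (show m - j + 1 ≤ Multiset.card s by rw [hs]; omega),
      hs, show m + 1 - (m - j + 1) = j by omega]
    have hc : ((m - j : ℕ) : ℝ) = (m : ℝ) - j := by
      rw [Nat.cast_sub hj]
    rw [hc]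
    ring
  have := e1.symm.trans e2
  have hsign : ((-1 : ℝ)^j) ≠ 0 := pow_ne_zero _ (by norm_num)
  rw [mul_left_comm, mul_left_comm (((m : ℝ) + 1 - j))] at this
  exact mul_left_cancel₀ hsign this

lemma newton : ∀ (m : ℕ) (s : Multiset ℝ), Multiset.card s = m → ∀ r : ℕ, 1 ≤ r → r + 1 ≤ m →
    (s.esymm (r-1) / (m.choose (r-1) : ℝ)) * (s.esymm (r+1) / (m.choose (r+1) : ℝ))
      ≤ (s.esymm r / (m.choose r : ℝ))^2 := by
  intro m
  induction m with
  | zero => intro s _ r _ h; omega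
  | succ m ih =>
    intro s hs r hr hrm
    rcases eq_or_lt_of_le hrm with heq | hlt
    · -- base case : r = m
      obtain rfl : m = r := by omega
      obtain ⟨x, hx⟩ := exists_fun (m+1) s hs
      have hes : ∀ j, s.esymm j = Es (m+1) j x := fun j => by rw [← hx, Es_eq]
      have hbase := base_fn (m+1) (by omega) x
      have h1 : m + 1 - 2 = m - 1 := by omega
      have h2 : m + 1 - 1 = m := by omega
      rw [h1, h2] at hbase
      have hc1 : (m+1).choose (m-1) = (m+1).choose 2 := by
        have := Nat.choose_symm (show 2 ≤ m + 1 by omega)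
        rwa [show m + 1 - 2 = m - 1 by omega] at this
      have hc2 : (m+1).choose m = m + 1 := by
        have := Nat.choose_symm (show 1 ≤ m + 1 by omega)
        rw [show m + 1 - 1 = m by omega] at this
        rw [this, Nat.choose_one_right]
      have hc3 : (m+1).choose (m+1) = 1 := Nat.choose_self _
      rw [hes (m-1), hes (m+1), hes m, hc1, hc2, hc3]
      have hC2pos : (0:ℝ) < ((m+1).choose 2 : ℝ) := by
        exact_mod_cast Nat.choose_pos (show 2 ≤ m + 1 by omega)
      have hmpos : (0:ℝ) < ((m:ℝ)+1)^2 := by positivity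
      rw [Nat.cast_one, div_one, div_pow, div_mul_eq_mul_div, div_le_div_iff₀ hC2pos (by positivity)]
      push_cast at hbase ⊢
      nlinarith [hbase]
    · -- inductive step
      obtain ⟨t, htc, ht⟩ := exists_deriv m s hs
      have hP : ∀ j, j ≤ m → s.esymm j / (((m+1).choose j : ℕ) : ℝ) = t.esymm j / ((m.choose j : ℕ) : ℝ) := by
        intro j hj
        have hcid : (m + 1 - j) * ((m+1).choose j) = (m+1) * (m.choose j) := by
          have h1 := Nat.add_one_mul_choose_eq m (m - j)
          rw [Nat.choose_symm hj] at h1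
          rw [show m - j + 1 = m + 1 - j by omega] at h1
          rw [Nat.choose_symm (show j ≤ m + 1 by omega)] at h1
          rw [mul_comm]
          exact h1.symm
        have hch1 : (0:ℝ) < (((m+1).choose j : ℕ) : ℝ) := by
          exact_mod_cast Nat.choose_pos (by omega)
        have hch2 : (0:ℝ) < ((m.choose j : ℕ) : ℝ) := by
          exact_mod_cast Nat.choose_pos hj
        have htj := ht j hj
        rw [div_eq_div_iff hch1.ne' hch2.ne']
        have hcidR : ((m:ℝ) + 1 - j) * (((m+1).choose j : ℕ) : ℝ) = ((m:ℝ)+1) * ((m.choose j : ℕ) : ℝ) := by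
          have := congrArg (fun z : ℕ => (z:ℝ)) hcid
          push_cast [Nat.cast_sub (show j ≤ m + 1 by omega)] at this
          convert this using 2 <;> push_cast <;> ring
        have hm1R : ((m:ℝ)+1) ≠ 0 := by positivity
        apply mul_left_cancel₀ hm1R
        calc ((m:ℝ)+1) * (s.esymm j * ((m.choose j : ℕ) : ℝ))
            = s.esymm j * (((m:ℝ)+1) * ((m.choose j : ℕ):ℝ)) := by ring
          _ = s.esymm j * (((m:ℝ)+1-j) * (((m+1).choose j : ℕ):ℝ)) := by rw [hcidR]
          _ = (((m:ℝ)+1-j) * s.esymm j) * (((m+1).choose j : ℕ):ℝ) := by ring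
          _ = (((m:ℝ)+1) * t.esymm j) * (((m+1).choose j : ℕ):ℝ) := by rw [← htj]
          _ = ((m:ℝ)+1) * (t.esymm j * (((m+1).choose j : ℕ):ℝ)) := by ring
      rw [hP (r-1) (by omega), hP r (by omega), hP (r+1) (by omega)]
      exact ih t htc r hr (by omega)

end MacAux

namespace MacAux

lemma newton_S (n : ℕ) (lam : Fin n → ℝ) (r : ℕ) (hr : 1 ≤ r) (hrn : r + 1 ≤ n) :
    S n (r-1) lam * S n (r+1) lam ≤ (S n r lam)^2 := by
  have h := newton n (Finset.univ.val.map lam) (card_univ_map lam) r hr hrn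
  simp only [Es_eq] at h
  exact h

lemma S_zero (n : ℕ) (x : Fin n → ℝ) : S n 0 x = 1 := by
  simp [S]

lemma mac_pow (n k : ℕ) (hkn : k ≤ n) (lam : Fin n → ℝ) (hlam : lam ∈ Gamma n k) :
    ∀ j, 1 ≤ j → j ≤ k → (S n j lam)^(j-1) ≤ (S n (j-1) lam)^j := by
  intro j hj
  induction j, hj using Nat.le_induction with
  | base => intro _; simp [S_zero]
  | succ j hj ihj =>
    intro hjk
    have hjk' : j ≤ k := by omega
    have ih := ihj hjk'
    have hnew := newton_S n lam j hj (by omega : j + 1 ≤ n)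
    have p0 : (0:ℝ) < S n (j-1) lam := by
      rcases Nat.eq_or_lt_of_le hj with h1 | h1
      · rw [← h1]; simp [S_zero]
      · exact hlam (j-1) (by omega) (by omega)
    have pj : (0:ℝ) < S n j lam := hlam j hj hjk'
    have pj1 : (0:ℝ) < S n (j+1) lam := hlam (j+1) (by omega) hjk
    rw [show j + 1 - 1 = j by omega]
    have key : (S n (j+1) lam)^j * (S n (j-1) lam)^j ≤ ((S n j lam)^2)^j := by
      rw [← mul_pow]
      apply pow_le_pow_left₀ (by positivity)
      rw [mul_comm]; exact hnew
    have key2 : (S n (j+1) lam)^j * (S n j lam)^(j-1)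
        ≤ (S n (j+1) lam)^j * (S n (j-1) lam)^j :=
      mul_le_mul_of_nonneg_left ih (by positivity)
    have key3 : ((S n j lam)^2)^j = (S n j lam)^(j+1) * (S n j lam)^(j-1) := by
      rw [← pow_mul, ← pow_add]
      congr 1
      omega
    have hfin := key2.trans (key.trans_eq key3)
    exact le_of_mul_le_mul_right hfin (by positivity : (0:ℝ) < (S n j lam)^(j-1))

end MacAux

theorem maclaurin_inequalities (n k : ℕ) (hk1 : 1 ≤ k) (hkn : k ≤ n)
    (lam : Fin n → ℝ) (hlam : lam ∈ Gamma n k) :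
    0 < (S n k lam) ^ ((1 : ℝ) / k) ∧
      ∀ j, 2 ≤ j → j ≤ k →
        (S n j lam) ^ ((1 : ℝ) / j) ≤ (S n (j - 1) lam) ^ ((1 : ℝ) / (j - 1)) := by
  constructor
  · exact Real.rpow_pos_of_pos (hlam k hk1 le_rfl) _
  · intro j h2 hjk
    have ha : (0:ℝ) < S n j lam := hlam j (by omega) hjk
    have hb : (0:ℝ) < S n (j-1) lam := hlam (j-1) (by omega) (by omega)
    have hpow : (S n j lam)^(j-1) ≤ (S n (j-1) lam)^j :=
      MacAux.mac_pow n k hkn lam hlam j (by omega) hjk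
    set a := S n j lam
    set b := S n (j-1) lam
    have hc1 : ((j-1 : ℕ) : ℝ) = (j : ℝ) - 1 := by
      rw [Nat.cast_sub (by omega : 1 ≤ j), Nat.cast_one]
    have hne1 : ((j : ℝ) - 1) ≠ 0 := by
      have : (2:ℝ) ≤ (j:ℝ) := by exact_mod_cast h2
      linarith
    have hnej : ((j : ℝ)) ≠ 0 := by
      have : (2:ℝ) ≤ (j:ℝ) := by exact_mod_cast h2
      linarith
    have hpow' : a ^ ((j : ℝ) - 1) ≤ b ^ (j : ℝ) := by
      rw [← hc1, Real.rpow_natCast, Real.rpow_natCast]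
      exact hpow
    calc a ^ ((1:ℝ) / (j : ℝ))
        = (a ^ ((j:ℝ) - 1)) ^ ((1:ℝ) / (((j:ℝ) - 1) * (j : ℝ))) := by
          rw [← Real.rpow_mul ha.le]
          congr 1
          field_simp
      _ ≤ (b ^ (j : ℝ)) ^ ((1:ℝ) / (((j:ℝ) - 1) * (j : ℝ))) := by
          have hexp : (0:ℝ) ≤ (1:ℝ) / (((j:ℝ) - 1) * (j : ℝ)) := by
            have : (2:ℝ) ≤ (j:ℝ) := by exact_mod_cast h2
            have h0 : (0:ℝ) < ((j:ℝ) - 1) * (j : ℝ) := by nlinarith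
            positivity
          exact Real.rpow_le_rpow (Real.rpow_nonneg ha.le _) hpow' hexp
      _ = b ^ ((1:ℝ) / ((j : ℝ) - 1)) := by
          rw [← Real.rpow_mul hb.le]
          congr 1
          field_simp
end

section
/- Γ_k equals the connected component of the set {λ ∈ ℝⁿ : S_k(λ) > 0} containing the positive orthant Γ_n. -/
open Polynomial Finset

namespace GammaAux

/-- Unnormalized elementary symmetric function. -/
noncomputable def E (n j : ℕ) (x : Fin n → ℝ) : ℝ :=
  ∑ t ∈ Finset.univ.powersetCard j, ∏ i ∈ t, x i

lemma S_eq (n j : ℕ) (x : Fin n → ℝ) : S n j x = E n j x / (n.choose j : ℝ) := rfl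

lemma S_pos_iff {n j : ℕ} (hj : j ≤ n) (x : Fin n → ℝ) : 0 < S n j x ↔ 0 < E n j x := by
  have hc : (0 : ℝ) < (n.choose j : ℝ) := by exact_mod_cast Nat.choose_pos hj
  rw [S_eq, div_pos_iff]
  constructor
  · rintro (⟨h, _⟩ | ⟨_, h⟩)
    · exact h
    · linarith
  · exact fun h => Or.inl ⟨h, hc⟩

lemma continuous_E (n j : ℕ) : Continuous (E n j) := by
  unfold E
  exact continuous_finset_sum _ fun t _ =>
    continuous_finset_prod _ fun i _ => continuous_apply i

/-- The polynomial `∏ (X + x i)`. -/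
noncomputable def Pl {n : ℕ} (x : Fin n → ℝ) : ℝ[X] := ∏ i, (X + C (x i))

lemma Pl_monic {n : ℕ} (x : Fin n → ℝ) : (Pl x).Monic :=
  monic_prod_of_monic _ _ fun i _ => monic_X_add_C _

lemma Pl_natDegree {n : ℕ} (x : Fin n → ℝ) : (Pl x).natDegree = n := by
  unfold Pl
  rw [natDegree_prod _ _ fun i _ => (monic_X_add_C (x i)).ne_zero]
  simp [natDegree_X_add_C]

lemma Pl_coeff {n j : ℕ} (hj : j ≤ n) (x : Fin n → ℝ) :
    (Pl x).coeff (n - j) = E n j x := by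
  unfold Pl E
  have hcard : #(univ : Finset (Fin n)) = n := by simp
  rw [Finset.prod_X_add_C_coeff univ x (by omega)]
  have h2 : #(univ : Finset (Fin n)) - (n - j) = j := by omega
  rw [h2]

lemma Pl_coeff_n {n : ℕ} (x : Fin n → ℝ) : (Pl x).coeff n = 1 := by
  have := (Pl_monic x).leadingCoeff
  rwa [leadingCoeff, Pl_natDegree] at this

lemma Pl_splits {n : ℕ} (x : Fin n → ℝ) : (Pl x).Splits :=
  Splits.prod fun i _ => Splits.of_natDegree_le_one (by simp [natDegree_X_add_C])

lemma splits_derivative {p : ℝ[X]} (hp : p.Splits) :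
    (derivative p).Splits := by
  rcases eq_or_ne (derivative p) 0 with h0 | h0
  · rw [h0]; exact Splits.zero
  have hd : p.natDegree ≠ 0 := by
    intro h
    rw [p.eq_C_of_natDegree_eq_zero h] at h0
    simp at h0
  rw [splits_iff_card_roots] at hp ⊢
  have h1 := card_roots_le_derivative p
  have h2 := (derivative p).card_roots'
  have h3 := natDegree_derivative_le p
  omega

lemma splits_iterate_derivative (m : ℕ) {p : ℝ[X]} (hp : p.Splits) :
    (derivative^[m] p).Splits := by
  induction m with
  | zero => exact hp
  | succ m ih => rw [Function.iterate_succ_apply']; exact splits_derivative ih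

lemma splits_hasseDeriv (m : ℕ) {p : ℝ[X]} (hp : p.Splits) :
    (hasseDeriv m p).Splits := by
  rcases eq_or_ne (hasseDeriv m p) 0 with h0 | h0
  · rw [h0]; exact Splits.zero
  have key : C ((Nat.factorial m : ℝ)) * hasseDeriv m p = derivative^[m] p := by
    have := congrFun (factorial_smul_hasseDeriv (R := ℝ) (k := m)) p
    simp only [LinearMap.smul_apply] at this
    rw [← this, nsmul_eq_mul]
    push_cast
    rw [← C_eq_natCast]
  have hfac : (C ((Nat.factorial m : ℝ))) * hasseDeriv m p ≠ 0 := by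
    rw [key]
    intro h
    apply h0
    have : hasseDeriv m p = C ((Nat.factorial m : ℝ))⁻¹ * (C ((Nat.factorial m : ℝ)) * hasseDeriv m p) := by
      rw [← mul_assoc, ← C_mul, inv_mul_cancel₀ (by positivity), C_1, one_mul]
    rw [this, key, h, mul_zero]
  have hs : Splits (C ((Nat.factorial m : ℝ)) * hasseDeriv m p) := by
    rw [key]; exact splits_iterate_derivative m hp
  exact hs.of_dvd hfac (dvd_mul_left _ _)

lemma esymm_pos {s : Multiset ℝ} (hs : ∀ r ∈ s, 0 < r) {j : ℕ} (hj : j ≤ Multiset.card s) :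
    0 < s.esymm j := by
  rw [Multiset.esymm]
  have hne : Multiset.powersetCard j s ≠ 0 := by
    rw [← Multiset.card_pos, Multiset.card_powersetCard]
    exact Nat.choose_pos hj
  obtain ⟨t, ht⟩ := Multiset.exists_mem_of_ne_zero hne
  obtain ⟨u, hu⟩ := Multiset.exists_cons_of_mem (Multiset.mem_map_of_mem Multiset.prod ht)
  rw [hu, Multiset.sum_cons]
  have htpos : 0 < t.prod := by
    apply Multiset.prod_pos
    intro r hr
    exact hs r (Multiset.mem_of_le (Multiset.mem_powersetCard.mp ht).1 hr)
  have husum : 0 ≤ u.sum := by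
    apply Multiset.sum_nonneg
    intro y hy
    have : y ∈ Multiset.map Multiset.prod (Multiset.powersetCard j s) := by
      rw [hu]; exact Multiset.mem_cons_of_mem hy
    obtain ⟨t', ht', rfl⟩ := Multiset.mem_map.mp this
    apply Multiset.prod_nonneg
    intro r hr
    exact (hs r (Multiset.mem_of_le (Multiset.mem_powersetCard.mp ht').1 hr)).le
  linarith

lemma eval_pos_of_coeff (Q : ℝ[X]) (h : ∀ m, 0 ≤ Q.coeff m) (h0 : 0 < Q.coeff 0)
    {t : ℝ} (ht : 0 ≤ t) : 0 < Q.eval t := by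
  rw [eval_eq_sum_range]
  have hle : Q.coeff 0 * t ^ 0 ≤ ∑ i ∈ range (Q.natDegree + 1), Q.coeff i * t ^ i :=
    Finset.single_le_sum (f := fun i => Q.coeff i * t ^ i)
      (fun i _ => mul_nonneg (h i) (pow_nonneg ht i)) (mem_range.mpr (Nat.succ_pos _))
  simp only [pow_zero, mul_one] at hle
  linarith

lemma E_pos_of_pos {n : ℕ} (x : Fin n → ℝ) (hx : ∀ i, 0 < x i) {j : ℕ} (hj : j ≤ n) :
    0 < E n j x := by
  unfold E
  apply Finset.sum_pos
  · intro t _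
    exact Finset.prod_pos fun i _ => hx i
  · rw [← Finset.card_pos, Finset.card_powersetCard]
    simpa using Nat.choose_pos hj

/-- Key lemma: nonneg `S_j` plus positive `S_k` forces all positive. -/
lemma key {n k : ℕ} (hkn : k ≤ n) (x : Fin n → ℝ)
    (h0 : ∀ j, 1 ≤ j → j ≤ k → 0 ≤ E n j x) (hk : 0 < E n k x) :
    ∀ j, 1 ≤ j → j ≤ k → 0 < E n j x := by
  set Q : ℝ[X] := hasseDeriv (n - k) (Pl x) with hQdef
  have hcoeff : ∀ j, j ≤ k → Q.coeff (k - j) = ((n - j).choose (n - k) : ℝ) * (Pl x).coeff (n - j) := by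
    intro j hj
    rw [hQdef, hasseDeriv_coeff, show k - j + (n - k) = n - j from by omega]
  have hhigh : ∀ m, k < m → Q.coeff m = 0 := by
    intro m hm
    rw [hQdef, hasseDeriv_coeff]
    rw [coeff_eq_zero_of_natDegree_lt (by rw [Pl_natDegree]; omega), mul_zero]
  have hQtop : Q.coeff k = (n.choose (n - k) : ℝ) := by
    have := hcoeff 0 (Nat.zero_le _)
    simpa [Pl_coeff_n] using this
  have hQtop_pos : 0 < Q.coeff k := by
    rw [hQtop]
    exact_mod_cast Nat.choose_pos (by omega)
  have hnonneg : ∀ m, 0 ≤ Q.coeff m := by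
    intro m
    rcases le_or_gt m k with h | h
    · rw [show m = k - (k - m) by omega, hcoeff (k - m) (by omega)]
      rcases Nat.eq_zero_or_pos (k - m) with h' | h'
      · rw [h']
        simp [Pl_coeff_n]
      · rw [Pl_coeff (by omega) x]
        exact mul_nonneg (by positivity) (h0 (k - m) h' (by omega))
    · rw [hhigh m h]
  have h00 : 0 < Q.coeff 0 := by
    have := hcoeff k le_rfl
    rw [Nat.sub_self, Nat.choose_self] at this
    rw [this, Pl_coeff hkn]
    simpa using hk
  have hQ0 : Q ≠ 0 := fun h => by simp [h] at h00
  have hdeg : Q.natDegree = k := by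
    apply le_antisymm
    · exact natDegree_le_iff_coeff_eq_zero.mpr fun m hm => hhigh m hm
    · exact le_natDegree_of_ne_zero (by rw [hQtop]; exact_mod_cast (Nat.choose_pos (by omega)).ne')
  have hsplits : Q.Splits := splits_hasseDeriv _ (Pl_splits x)
  have heval : ∀ t : ℝ, 0 ≤ t → 0 < Q.eval t := fun t ht => eval_pos_of_coeff Q hnonneg h00 ht
  have hroots_neg : ∀ r ∈ Q.roots, r < 0 := by
    intro r hr
    by_contra h
    push_neg at h
    have h1 := heval r h
    have h2 : Q.eval r = 0 := (mem_roots hQ0).mp hr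
    linarith
  have hcard : Multiset.card Q.roots = k := by
    rw [splits_iff_card_roots.mp hsplits, hdeg]
  intro j hj1 hjk
  have hco := Polynomial.coeff_eq_esymm_roots_of_splits hsplits
    (show k - j ≤ Q.natDegree by rw [hdeg]; omega)
  rw [hdeg, show k - (k - j) = j by omega] at hco
  have hlead : 0 < Q.leadingCoeff := by
    rwa [leadingCoeff, hdeg]
  have hpos : 0 < (Q.roots.map (fun r => -r)).esymm j := by
    apply esymm_pos
    · intro r hr
      obtain ⟨r', hr', rfl⟩ := Multiset.mem_map.mp hr
      simpa using hroots_neg r' hr'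
    · rw [Multiset.card_map, hcard]; omega
  rw [Multiset.esymm_neg] at hpos
  have hcpos : 0 < Q.coeff (k - j) := by
    rw [hco, mul_assoc]
    exact mul_pos hlead hpos
  rw [hcoeff j hjk, Pl_coeff (by omega) x] at hcpos
  have hch : (0 : ℝ) < ((n - j).choose (n - k) : ℝ) := by
    exact_mod_cast Nat.choose_pos (by omega)
  nlinarith

/-- Shifting by a nonnegative multiple of `(1,…,1)` stays in the cone. -/
lemma shift_mem {n k : ℕ} (hkn : k ≤ n) (x : Fin n → ℝ)
    (hx : ∀ j, 1 ≤ j → j ≤ k → 0 < E n j x) {t : ℝ} (ht : 0 ≤ t) :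
    ∀ j, 1 ≤ j → j ≤ k → 0 < E n j (fun i => x i + t) := by
  intro j hj1 hjk
  have hjn : j ≤ n := le_trans hjk hkn
  have hPl : Pl (fun i => x i + t) = taylor t (Pl x) := by
    rw [taylor_apply]
    unfold Pl
    rw [Polynomial.prod_comp]
    congr 1
    funext i
    simp only [add_comp, X_comp, C_comp, C_add]
    ring
  have hEeq : E n j (fun i => x i + t) = (hasseDeriv (n - j) (Pl x)).eval t := by
    rw [← Pl_coeff hjn, hPl, taylor_coeff]
  rw [hEeq]
  set R : ℝ[X] := hasseDeriv (n - j) (Pl x) with hRdef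
  have hcoeff : ∀ m, m ≤ j → R.coeff m = ((n - (j - m)).choose (n - j) : ℝ) * (Pl x).coeff (n - (j - m)) := by
    intro m hm
    rw [hRdef, hasseDeriv_coeff, show m + (n - j) = n - (j - m) from by omega]
  have hnonneg : ∀ m, 0 ≤ R.coeff m := by
    intro m
    rcases le_or_gt m j with h | h
    · rw [hcoeff m h]
      rcases Nat.eq_zero_or_pos (j - m) with h' | h'
      · rw [h']
        simp only [Nat.sub_zero, Pl_coeff_n, mul_one]
        positivity
      · rw [Pl_coeff (by omega) x]
        exact mul_nonneg (by positivity) (hx (j - m) h' (by omega)).le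
    · rw [hRdef, hasseDeriv_coeff,
        coeff_eq_zero_of_natDegree_lt (by rw [Pl_natDegree]; omega), mul_zero]
  have h00 : 0 < R.coeff 0 := by
    have h := hcoeff 0 (Nat.zero_le _)
    simp only [Nat.sub_zero] at h
    rw [h, Nat.choose_self]
    simpa [Pl_coeff hjn x] using hx j hj1 hjk
  exact eval_pos_of_coeff R hnonneg h00 ht

lemma isOpen_Gamma (n k : ℕ) : IsOpen (Gamma n k) := by
  have heq : Gamma n k = ⋂ j ∈ Finset.Icc 1 k, {x : Fin n → ℝ | 0 < S n j x} := by
    ext y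
    simp only [Gamma, Set.mem_setOf_eq, Set.mem_iInter, Finset.mem_Icc]
    constructor
    · rintro h j ⟨h1, h2⟩
      exact h j h1 h2
    · intro h j h1 h2
      exact h j ⟨h1, h2⟩
  rw [heq]
  apply isOpen_biInter_finset
  intro j _
  exact isOpen_lt continuous_const ((continuous_E n j).div_const _)

end GammaAux

open GammaAux in
theorem Gamma_eq_connectedComponent (n k : ℕ) (hk1 : 1 ≤ k) (hkn : k ≤ n)
    (x : Fin n → ℝ) (hx : ∀ i, 0 < x i) :
    Gamma n k = connectedComponentIn {lam : Fin n → ℝ | 0 < S n k lam} x := by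
  set F := {lam : Fin n → ℝ | 0 < S n k lam} with hF
  have hxF : x ∈ F := by
    rw [hF, Set.mem_setOf_eq, S_pos_iff hkn]
    exact E_pos_of_pos x hx hkn
  have hGammaF : Gamma n k ⊆ F := fun y hy => hy k hk1 le_rfl
  have hxGamma : x ∈ Gamma n k := by
    intro j hj1 hjk
    rw [S_pos_iff (le_trans hjk hkn)]
    exact E_pos_of_pos x hx (le_trans hjk hkn)
  apply Set.Subset.antisymm
  · -- Gamma ⊆ component
    intro lam hlam
    set T : ℝ := ‖lam‖ + 1 with hT
    have hTi : ∀ i, 0 < lam i + T := by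
      intro i
      have h1 : ‖lam i‖ ≤ ‖lam‖ := norm_le_pi_norm lam i
      rw [Real.norm_eq_abs] at h1
      have := neg_abs_le (lam i)
      rw [hT]; linarith
    set mu : Fin n → ℝ := fun i => lam i + T with hmu
    have hseg1 : segment ℝ lam mu ⊆ Gamma n k := by
      rintro s ⟨a, b, ha, hb, hab, rfl⟩
      have hs : a • lam + b • mu = fun i => lam i + b * T := by
        funext i
        simp only [Pi.add_apply, Pi.smul_apply, smul_eq_mul, hmu]
        have : a = 1 - b := by linarith
        rw [this]; ring
      rw [hs]
      intro j hj1 hjk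
      rw [S_pos_iff (le_trans hjk hkn)]
      have hlamE : ∀ j, 1 ≤ j → j ≤ k → 0 < E n j lam := by
        intro j h1 h2
        have := hlam j h1 h2
        rwa [S_pos_iff (le_trans h2 hkn)] at this
      have hbT : 0 ≤ b * T := by
        have : 0 ≤ T := by
          rw [hT]; positivity
        positivity
      exact shift_mem hkn lam hlamE hbT j hj1 hjk
    have hseg2 : segment ℝ mu x ⊆ F := by
      rintro s ⟨a, b, ha, hb, hab, rfl⟩
      have hpos : ∀ i, 0 < (a • mu + b • x) i := by
        intro i
        simp only [Pi.add_apply, Pi.smul_apply, smul_eq_mul]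
        rcases eq_or_lt_of_le ha with h | h
        · have hb1 : b = 1 := by linarith
          rw [← h, hb1]; simpa using hx i
        · have hmui : 0 < mu i := hTi i
          have h1 := mul_pos h hmui
          have h2 := mul_nonneg hb (hx i).le
          linarith
      rw [hF, Set.mem_setOf_eq, S_pos_iff hkn]
      exact E_pos_of_pos _ hpos hkn
    have hconn : IsPreconnected (segment ℝ lam mu ∪ segment ℝ mu x) :=
      IsPreconnected.union mu (right_mem_segment ℝ lam mu) (left_mem_segment ℝ mu x)
        (convex_segment lam mu).isPreconnected (convex_segment mu x).isPreconnected
    have hsubF : segment ℝ lam mu ∪ segment ℝ mu x ⊆ F :=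
      Set.union_subset (fun s hs => hGammaF (hseg1 hs)) hseg2
    have hxin : x ∈ segment ℝ lam mu ∪ segment ℝ mu x :=
      Or.inr (right_mem_segment ℝ mu x)
    exact hconn.subset_connectedComponentIn hxin hsubF (Or.inl (left_mem_segment ℝ lam mu))
  · -- component ⊆ Gamma
    have hU : IsOpen (Gamma n k) := isOpen_Gamma n k
    have hV : IsOpen (closure (Gamma n k))ᶜ := isClosed_closure.isOpen_compl
    have hdisj : Disjoint (Gamma n k) (closure (Gamma n k))ᶜ :=
      disjoint_compl_right.mono_left subset_closure
    have hsub : connectedComponentIn F x ⊆ Gamma n k ∪ (closure (Gamma n k))ᶜ := by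
      intro y hy
      by_cases hcy : y ∈ closure (Gamma n k)
      · left
        have hyF : y ∈ F := connectedComponentIn_subset F x hy
        have hEk : 0 < E n k y := by
          rw [hF, Set.mem_setOf_eq, S_pos_iff hkn] at hyF
          exact hyF
        have h0 : ∀ j, 1 ≤ j → j ≤ k → 0 ≤ E n j y := by
          intro j h1 h2
          have hclosed : IsClosed {z : Fin n → ℝ | 0 ≤ E n j z} :=
            isClosed_le continuous_const (continuous_E n j)
          have hsub' : Gamma n k ⊆ {z : Fin n → ℝ | 0 ≤ E n j z} := by
            intro z hz
            exact (le_of_lt ((S_pos_iff (le_trans h2 hkn) z).mp (hz j h1 h2)))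
          exact closure_minimal hsub' hclosed hcy
        intro j h1 h2
        rw [S_pos_iff (le_trans h2 hkn)]
        exact key hkn y h0 hEk j h1 h2
      · right; exact hcy
    have hnon : (connectedComponentIn F x ∩ Gamma n k).Nonempty :=
      ⟨x, mem_connectedComponentIn hxF, hxGamma⟩
    exact isPreconnected_connectedComponentIn.subset_left_of_subset_union hU hV hdisj hsub hnon
end

section
/- If λ = (λ₁,…,λₙ) ∈ Γ_k with λ₁ ≥ λ₂ ≥ ⋯ ≥ λₙ, then the partial derivatives of S_k are ordered oppositely: ∂S_k/∂λ₁ ≤ ∂S_k/∂λ₂ ≤ ⋯ ≤ ∂S_k/∂λₙ. -/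
set_option linter.unusedSectionVars false
set_option maxHeartbeats 1600000

open Finset


variable {ι : Type*} [DecidableEq ι]

/-- Elementary symmetric function of `f` over the finset `A`. -/
noncomputable def Esym (f : ι → ℝ) (j : ℕ) (A : Finset ι) : ℝ :=
  ∑ t ∈ A.powersetCard j, ∏ i ∈ t, f i

lemma Esym_zero (f : ι → ℝ) (A : Finset ι) : Esym f 0 A = 1 := by
  simp [Esym]

lemma Esym_eq_zero_of_card_lt (f : ι → ℝ) {j : ℕ} {A : Finset ι} (h : A.card < j) :
    Esym f j A = 0 := by
  simp [Esym, powersetCard_eq_empty.2 h]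

lemma Esym_congr {f g : ι → ℝ} (j : ℕ) (A : Finset ι) (h : ∀ i ∈ A, f i = g i) :
    Esym f j A = Esym g j A := by
  refine Finset.sum_congr rfl fun t ht => Finset.prod_congr rfl fun i hi => ?_
  exact h i ((mem_powersetCard.1 ht).1 hi)

/-- Deletion identity. -/
lemma Esym_erase (f : ι → ℝ) (j : ℕ) {A : Finset ι} {i : ι} (hi : i ∈ A) :
    Esym f (j+1) A = Esym f (j+1) (A.erase i) + f i * Esym f j (A.erase i) := by
  classical
  have h1 : A = insert i (A.erase i) := (insert_erase hi).symm
  rw [Esym]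
  nth_rewrite 1 [h1]
  rw [powersetCard_succ_insert (notMem_erase i A)]
  rw [Finset.sum_union]
  · congr 1
    rw [Finset.sum_image]
    · rw [Esym, Finset.mul_sum]
      refine Finset.sum_congr rfl fun t ht => ?_
      rw [Finset.prod_insert (fun hit => (mem_erase.1 ((mem_powersetCard.1 ht).1 hit)).1 rfl)]
    · intro t ht u hu htu
      have hti : i ∉ t := fun h' => (mem_erase.1 ((mem_powersetCard.1 ht).1 h')).1 rfl
      have hui : i ∉ u := fun h' => (mem_erase.1 ((mem_powersetCard.1 hu).1 h')).1 rfl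
      have := congrArg (fun x => Finset.erase x i) htu
      simpa [Finset.erase_insert hti, Finset.erase_insert hui] using this
  · rw [Finset.disjoint_right]
    intro t ht ht2
    obtain ⟨u, hu, rfl⟩ := Finset.mem_image.1 ht
    have := (mem_powersetCard.1 ht2).1 (mem_insert_self i u)
    exact (mem_erase.1 this).1 rfl

lemma Esym_pos {f : ι → ℝ} {A : Finset ι} (hf : ∀ i ∈ A, 0 < f i) {j : ℕ} (hj : j ≤ A.card) :
    0 < Esym f j A := by
  refine Finset.sum_pos (fun t ht => Finset.prod_pos fun i hi => hf i ((mem_powersetCard.1 ht).1 hi)) (powersetCard_nonempty_of_le hj)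
lemma Esym_self (f : ι → ℝ) (A : Finset ι) : Esym f A.card A = ∏ i ∈ A, f i := by
  simp [Esym, powersetCard_self]

/-- Double counting. -/
lemma sum_erase_Esym (f : ι → ℝ) (j : ℕ) (A : Finset ι) :
    ∑ i ∈ A, Esym f j (A.erase i) = ((A.card - j : ℕ) : ℝ) * Esym f j A := by
  classical
  unfold Esym
  rw [Finset.sum_comm' (s := A) (t := fun i => (A.erase i).powersetCard j)
    (t' := A.powersetCard j) (s' := fun t => A \ t)
    (h := fun i t => by
      simp only [mem_powersetCard, Finset.subset_erase, Finset.mem_sdiff]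
      tauto)]
  rw [Finset.mul_sum]
  refine Finset.sum_congr rfl fun t ht => ?_
  rw [Finset.sum_const, nsmul_eq_mul]
  obtain ⟨hsub, hcard⟩ := mem_powersetCard.1 ht
  rw [card_sdiff_of_subset hsub, hcard]

lemma newton_top (f : ι → ℝ) (A : Finset ι) (p : ℕ) (hA : A.card = p + 2) :
    Esym f p A / ((p+2).choose p : ℝ) * (Esym f (p+2) A / ((p+2).choose (p+2) : ℝ)) ≤
      (Esym f (p+1) A / ((p+2).choose (p+1) : ℝ))^2 := by
  classical
  set Q := ∑ i ∈ A, ∏ x ∈ A.erase i, f x with hQ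
  set R := ∑ i ∈ A, (∏ x ∈ A.erase i, f x)^2 with hR
  -- (A1)
  have hA1 : Esym f (p+1) A = Q := by
    have := sum_erase_Esym f (p+1) A
    rw [hA] at this
    have h2 : ∀ i ∈ A, Esym f (p+1) (A.erase i) = ∏ x ∈ A.erase i, f x := by
      intro i hi
      have : (A.erase i).card = p + 1 := by rw [card_erase_of_mem hi, hA]; omega
      rw [← this, Esym_self]
    rw [Finset.sum_congr rfl h2] at this
    simpa using this.symm
  -- (A2)
  have hA2 : 2 * Esym f p A * Esym f (p+2) A = Q^2 - R := by
    have key : ∀ i ∈ A, ∑ j ∈ A.erase i, Esym f p ((A.erase i).erase j)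
        = Esym f p (A.erase i) := by
      intro i hi
      have := sum_erase_Esym f p (A.erase i)
      rw [card_erase_of_mem hi, hA] at this
      simpa using this
    have key2 : ∑ i ∈ A, Esym f p (A.erase i) = 2 * Esym f p A := by
      have := sum_erase_Esym f p A
      rw [hA] at this
      have h2 : p + 2 - p = 2 := by omega
      rw [this, h2]; push_cast; ring
    -- each double-erase Esym is a product
    have key3 : ∀ i ∈ A, ∀ j ∈ A.erase i,
        Esym f p ((A.erase i).erase j) * (∏ x ∈ A, f x)
          = (∏ x ∈ A.erase i, f x) * (∏ x ∈ A.erase j, f x) := by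
      intro i hi j hj
      have hji : j ∈ A.erase i := hj
      have hjA : j ∈ A := Finset.mem_of_mem_erase hj
      have hij : i ≠ j := fun h => (Finset.mem_erase.1 hj).1 h.symm
      have hcard : ((A.erase i).erase j).card = p := by
        rw [card_erase_of_mem hji, card_erase_of_mem hi, hA]; omega
      rw [← hcard, Esym_self]
      have e1 : ∏ x ∈ A.erase i, f x = f j * ∏ x ∈ (A.erase i).erase j, f x :=
        (Finset.mul_prod_erase _ f hji).symm
      have hie : i ∈ A.erase j := Finset.mem_erase.2 ⟨hij, hi⟩
      have e2 : ∏ x ∈ A.erase j, f x = f i * ∏ x ∈ (A.erase j).erase i, f x :=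
        (Finset.mul_prod_erase _ f hie).symm
      have e3 : ∏ x ∈ A, f x = f i * ∏ x ∈ A.erase i, f x :=
        (Finset.mul_prod_erase _ f hi).symm
      rw [Finset.erase_right_comm (a := j) (b := i)] at e2
      rw [e3, e2, e1]
      ring
    have expand : 2 * Esym f p A * (∏ x ∈ A, f x)
        = ∑ i ∈ A, (∏ x ∈ A.erase i, f x) * (Q - ∏ x ∈ A.erase i, f x) := by
      rw [← key2, Finset.sum_mul]
      have : ∀ i ∈ A, Esym f p (A.erase i) * (∏ x ∈ A, f x)
          = (∏ x ∈ A.erase i, f x) * (Q - ∏ x ∈ A.erase i, f x) := by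
        intro i hi
        rw [← key i hi, Finset.sum_mul, Finset.sum_congr rfl (key3 i hi)]
        rw [← Finset.mul_sum, hQ]
        have : ∑ j ∈ A.erase i, ∏ x ∈ A.erase j, f x
            = (∑ j ∈ A, ∏ x ∈ A.erase j, f x) - ∏ x ∈ A.erase i, f x := by
          rw [← Finset.sum_erase_add A _ hi]; ring
        rw [this]
      exact Finset.sum_congr rfl this
    have hEtop : Esym f (p+2) A = ∏ x ∈ A, f x := by rw [← hA, Esym_self]
    rw [hEtop, expand]
    have : ∑ i ∈ A, (∏ x ∈ A.erase i, f x) * (Q - ∏ x ∈ A.erase i, f x)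
        = Q * Q - R := by
      rw [hR, hQ]
      simp only [mul_sub]
      rw [Finset.sum_sub_distrib, ← Finset.sum_mul]
      simp only [← sq]
    rw [this]; ring
  -- Cauchy-Schwarz
  have hCS : Q^2 ≤ ((p:ℝ)+2) * R := by
    have h := Finset.sum_mul_sq_le_sq_mul_sq A (fun _ => (1:ℝ)) (fun i => ∏ x ∈ A.erase i, f x)
    simp only [one_pow, one_mul, Finset.sum_const, nsmul_eq_mul] at h
    rw [hA] at h
    rw [hQ, hR]
    push_cast at h ⊢
    nlinarith [h]
  -- choose values
  have c1 : ((p+2).choose (p+2) : ℝ) = 1 := by norm_num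
  have c2 : ((p+2).choose (p+1) : ℝ) = ((p:ℝ)+2) := by
    have : (p+2).choose (p+1) = p+2 := by
      rw [show p+1 = (p+2)-1 from rfl, Nat.choose_symm (by omega)]
      simp
    rw [this]; push_cast; ring
  have c3 : ((p+2).choose p : ℝ) * 2 = ((p:ℝ) + 2) * ((p:ℝ) + 1) := by
    have h1 : (p+2).choose p = (p+2).choose 2 := by
      have := Nat.choose_symm (n := p+2) (k := 2) (by omega)
      simpa using this
    have h2 : (p+2).choose 2 * 2 = (p+2) * (p+1) := by
      have hd : 2 ∣ (p+2) * (p+1) := by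
        rcases Nat.even_or_odd p with he | ho
        · obtain ⟨r, hr⟩ := he
          exact Dvd.dvd.mul_right ⟨r+1, by omega⟩ _
        · obtain ⟨r, hr⟩ := ho
          exact Dvd.dvd.mul_left ⟨r+1, by omega⟩ _
      rw [Nat.choose_two_right, show p+2-1 = p+1 from rfl, Nat.div_mul_cancel hd]
    have := congrArg (fun x : ℕ => (x : ℝ)) (h1 ▸ h2)
    push_cast at this
    linarith [this]
  have hCp : (0:ℝ) < ((p+2).choose p : ℝ) := by
    exact_mod_cast Nat.cast_pos.2 (Nat.choose_pos (by omega))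
  rw [hA1, c1, c2, div_one, div_pow, div_mul_eq_mul_div, div_le_div_iff₀ hCp (by positivity)]
  nlinarith [hA2, c3, mul_le_mul_of_nonneg_left hCS (show (0:ℝ) ≤ (p:ℝ)+2 by positivity)]

open Polynomial in
lemma exists_deriv (s : Multiset ℝ) (hs : 1 ≤ Multiset.card s) :
    ∃ s' : Multiset ℝ, Multiset.card s' = Multiset.card s - 1 ∧
      ∀ i, i ≤ Multiset.card s - 1 →
        (Multiset.card s : ℝ) * s'.esymm i = ((Multiset.card s - i : ℕ) : ℝ) * s.esymm i := by
  classical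
  set m := Multiset.card s with hm
  set q : Polynomial ℝ := (s.map fun r => X + C r).prod with hqdef
  have hq_eq : q = ((s.map Neg.neg).map fun r => X - C r).prod := by
    rw [hqdef, Multiset.map_map]
    congr 1
    apply Multiset.map_congr rfl
    intro x _
    simp [sub_neg_eq_add]
  have hroots : q.roots = s.map Neg.neg := by
    rw [hq_eq, roots_multiset_prod_X_sub_C]
  have hmon : ∀ f ∈ s.map fun r => X + C r, f.Monic := by
    intro f hf
    obtain ⟨r, _, rfl⟩ := Multiset.mem_map.1 hf
    exact monic_X_add_C r
  have hmonic : q.Monic := monic_multiset_prod_of_monic _ _ (fun i _ => monic_X_add_C i)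
  have hdeg : q.natDegree = m := by
    rw [hqdef, natDegree_multiset_prod_of_monic _ hmon]
    simp [Multiset.map_map, Function.comp_def, natDegree_X_add_C, hm]
  have hcoeff : ∀ i, i ≤ m → q.coeff (m - i) = s.esymm i := by
    intro i hi
    have h := Multiset.prod_X_add_C_coeff s (show m - i ≤ Multiset.card s by omega)
    rw [← hqdef] at h
    rw [h]
    congr 1
    omega
  set q' := derivative q with hq'
  have hq'deg_le : q'.natDegree ≤ m - 1 := le_trans (natDegree_derivative_le q) (by omega)
  have hlead : q'.coeff (m-1) = (m : ℝ) := by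
    rw [hq', coeff_derivative, show m - 1 + 1 = m by omega, ← hdeg, hmonic.coeff_natDegree]
    rw [hdeg]
    have : ((m - 1 : ℕ) : ℝ) + 1 = (m : ℝ) := by
      push_cast [Nat.cast_sub hs]
      ring
    rw [one_mul, this]
  have hmne : (m : ℝ) ≠ 0 := by
    have : 0 < m := hs
    exact_mod_cast this.ne'
  have hq'deg : q'.natDegree = m - 1 :=
    le_antisymm hq'deg_le (le_natDegree_of_ne_zero (by rw [hlead]; exact hmne))
  have hcard_le : (m - 1 : ℕ) ≤ Multiset.card q'.roots := by
    have h := card_roots_le_derivative q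
    rw [← hq'] at h
    rw [hroots] at h
    simp only [Multiset.card_map] at h
    omega
  have hcard_ge : Multiset.card q'.roots ≤ m - 1 := by
    have h := card_roots' q'
    omega
  have hcard : Multiset.card q'.roots = m - 1 := le_antisymm hcard_ge hcard_le
  have hsplits : q'.Splits :=
    (splits_iff_card_roots).2 (by rw [hcard, hq'deg])
  have hfact : q' = C q'.leadingCoeff * (q'.roots.map fun a => X - C a).prod :=
    hsplits.eq_prod_roots
  have hlc : q'.leadingCoeff = (m : ℝ) := by
    rw [leadingCoeff, hq'deg, hlead]
  refine ⟨q'.roots.map Neg.neg, by simp [hcard], ?_⟩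
  intro i hi
  have hway1 : q'.coeff (m-1-i) = (m : ℝ) * (q'.roots.map Neg.neg).esymm i := by
    conv_lhs => rw [hfact]
    rw [coeff_C_mul, hlc]
    have hre : (q'.roots.map fun a => X - C a).prod
        = ((q'.roots.map Neg.neg).map fun r => X + C r).prod := by
      rw [Multiset.map_map]
      congr 1
      apply Multiset.map_congr rfl
      intro x _
      simp [sub_eq_add_neg]
    rw [hre, Multiset.prod_X_add_C_coeff _
      (show m - 1 - i ≤ Multiset.card (q'.roots.map Neg.neg) by
        simp only [Multiset.card_map, hcard]; omega)]
    congr 2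
    simp only [Multiset.card_map, hcard]
    omega
  have hway2 : q'.coeff (m-1-i) = ((m - i : ℕ) : ℝ) * s.esymm i := by
    rw [hq', coeff_derivative, show m - 1 - i + 1 = m - i by omega, hcoeff i (by omega)]
    have : ((m - 1 - i : ℕ) : ℝ) + 1 = ((m - i : ℕ) : ℝ) := by
      have h1 : (m - 1 - i) + 1 = m - i := by omega
      exact_mod_cast congrArg (fun x : ℕ => (x : ℝ)) h1
    rw [this]
    ring
  rw [← hway1, hway2]


lemma choose_id (m i : ℕ) : (m - i) * m.choose i = m * (m-1).choose i := by
  rcases m with _ | n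
  · rcases i with _ | i <;> simp
  · rcases Nat.lt_or_ge n.succ i with h | h
    · rw [Nat.choose_eq_zero_of_lt h, Nat.choose_eq_zero_of_lt (by omega), mul_zero, mul_zero]
    · have h1 := Nat.add_one_mul_choose_eq n i
      have h2 := Nat.choose_succ_right_eq (n+1) i
      calc (n + 1 - i) * (n+1).choose i = (n+1).choose i * (n + 1 - i) := mul_comm _ _
        _ = (n+1).choose (i+1) * (i+1) := h2.symm
        _ = (n+1) * n.choose i := by rw [← h1]
        _ = (n+1) * (n+1-1).choose i := by norm_num

lemma choose_log_concave (m j : ℕ) (hj : 1 ≤ j) :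
    m.choose (j-1) * m.choose (j+1) ≤ m.choose j ^ 2 := by
  obtain ⟨r, rfl⟩ : ∃ r, j = r + 1 := ⟨j - 1, by omega⟩
  simp only [Nat.add_sub_cancel]
  rcases Nat.lt_or_ge m (r+2) with h | h
  · rw [Nat.choose_eq_zero_of_lt (show m < r+1+1 by omega), mul_zero]
    positivity
  · have e1 := Nat.choose_succ_right_eq m r
    have e2 := Nat.choose_succ_right_eq m (r+1)
    have key : m.choose r * m.choose (r+1+1) * ((m - r) * (r+2)) =
        (m.choose (r+1))^2 * ((r+1) * (m - (r+1))) := by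
      calc m.choose r * m.choose (r+1+1) * ((m - r) * (r+2))
          = (m.choose r * (m-r)) * (m.choose (r+1+1) * (r+2)) := by ring
        _ = (m.choose (r+1) * (r+1)) * (m.choose (r+1) * (m - (r+1))) := by rw [← e1, e2]
        _ = (m.choose (r+1))^2 * ((r+1) * (m - (r+1))) := by ring
    have hmono : (r+1) * (m - (r+1)) ≤ (m - r) * (r+2) := by
      have : m - (r+1) ≤ m - r := by omega
      calc (r+1) * (m - (r+1)) ≤ (r+2) * (m - r) := Nat.mul_le_mul (by omega) this
        _ = (m - r) * (r+2) := mul_comm _ _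
    have hpos : 0 < (m - r) * (r+2) := by
      have : 0 < m - r := by omega
      positivity
    refine Nat.le_of_mul_le_mul_right ?_ hpos
    calc m.choose r * m.choose (r+1+1) * ((m - r) * (r+2))
        = (m.choose (r+1))^2 * ((r+1) * (m - (r+1))) := key
      _ ≤ (m.choose (r+1))^2 * ((m - r) * (r+2)) := Nat.mul_le_mul_left _ hmono

lemma esymm_zero_of_card_lt {s : Multiset ℝ} {j : ℕ} (h : Multiset.card s < j) :
    s.esymm j = 0 := by
  rw [Multiset.esymm, Multiset.powersetCard_eq_empty _ h]
  simp
lemma exists_enum (s : Multiset ℝ) :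
    ∃ f : Fin (Multiset.card s) → ℝ, s = Multiset.map f Finset.univ.val := by
  induction s using Quotient.inductionOn with
  | h l =>
    refine ⟨l.get, ?_⟩
    have : Finset.univ.val = ((List.finRange l.length : List (Fin l.length)) : Multiset (Fin l.length)) := rfl
    change (l : Multiset ℝ) = Multiset.map l.get (Finset.univ : Finset (Fin l.length)).val
    rw [this, Multiset.map_coe, ← List.ofFn_eq_map, List.ofFn_get]

theorem newton_norm (d : ℕ) : ∀ (s : Multiset ℝ) (j : ℕ), 1 ≤ j →
    Multiset.card s = j + 1 + d →
    s.esymm (j-1) / ((Multiset.card s).choose (j-1) : ℝ) *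
      (s.esymm (j+1) / ((Multiset.card s).choose (j+1) : ℝ)) ≤
    (s.esymm j / ((Multiset.card s).choose j : ℝ))^2 := by
  induction d with
  | zero =>
    intro s j hj hcard
    obtain ⟨f, hf⟩ := exists_enum s
    obtain ⟨p, rfl⟩ : ∃ p, j = p + 1 := ⟨j - 1, by omega⟩
    have hcardu : (Finset.univ : Finset (Fin (Multiset.card s))).card = p + 2 := by
      simp [hcard]
    have hbridge : ∀ i, s.esymm i = Esym f i Finset.univ := by
      intro i
      conv_lhs => rw [hf]
      rw [Finset.esymm_map_val]
      rfl
    have h := newton_top f Finset.univ p hcardu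
    simp only [Nat.add_sub_cancel]
    rw [hbridge, hbridge, hbridge]
    have e1 : ((Multiset.card s).choose p : ℝ) = ((p+2).choose p : ℝ) := by rw [hcard]
    have e2 : ((Multiset.card s).choose (p+1) : ℝ) = ((p+2).choose (p+1) : ℝ) := by rw [hcard]
    have e3 : ((Multiset.card s).choose (p+1+1) : ℝ) = ((p+2).choose (p+2) : ℝ) := by
      rw [hcard]
    have e4 : Esym f (p+1+1) Finset.univ = Esym f (p+2) Finset.univ := by norm_num
    rw [e1, e2, e3, e4]
    exact h
  | succ d ih =>
    intro s j hj hcard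
    have hs1 : 1 ≤ Multiset.card s := by omega
    obtain ⟨s', hcard', hrel⟩ := exists_deriv s hs1
    have htrans : ∀ i, i ≤ Multiset.card s - 1 →
        s.esymm i / ((Multiset.card s).choose i : ℝ)
          = s'.esymm i / ((Multiset.card s - 1).choose i : ℝ) := by
      intro i hi
      have h1 := hrel i hi
      have h2 : ((Multiset.card s - i) * (Multiset.card s).choose i : ℕ)
          = (Multiset.card s * (Multiset.card s - 1).choose i : ℕ) :=
        choose_id _ _
      have h2' : ((Multiset.card s - i : ℕ) : ℝ) * ((Multiset.card s).choose i : ℝ)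
          = (Multiset.card s : ℝ) * ((Multiset.card s - 1).choose i : ℝ) := by
        exact_mod_cast congrArg (fun x : ℕ => (x : ℝ)) h2
      have hC : (0:ℝ) < ((Multiset.card s).choose i : ℝ) := by
        exact_mod_cast Nat.choose_pos (by omega)
      have hC' : (0:ℝ) < ((Multiset.card s - 1).choose i : ℝ) := by
        exact_mod_cast Nat.choose_pos (by omega)
      have hm0 : (Multiset.card s : ℝ) ≠ 0 := by
        exact_mod_cast (by omega : Multiset.card s ≠ 0)
      rw [div_eq_div_iff hC.ne' hC'.ne']
      apply mul_left_cancel₀ hm0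
      linear_combination (- (s.esymm i)) * h2' - (((Multiset.card s).choose i : ℕ) : ℝ) * h1
    have hIH := ih s' j hj (by omega)
    rw [hcard'] at hIH
    rw [htrans (j-1) (by omega), htrans j (by omega), htrans (j+1) (by omega)]
    exact hIH

theorem newton_unnorm (s : Multiset ℝ) (j : ℕ) (hj : 1 ≤ j) :
    s.esymm (j-1) * s.esymm (j+1) ≤ s.esymm j ^ 2 := by
  rcases Nat.lt_or_ge (Multiset.card s) (j+1) with h | h
  · rw [esymm_zero_of_card_lt h, mul_zero]
    positivity
  · have hnorm := newton_norm (Multiset.card s - (j+1)) s j hj (by omega)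
    set m := Multiset.card s
    have hC1 : (0:ℝ) < (m.choose (j-1) : ℝ) := by
      exact_mod_cast Nat.choose_pos (by omega)
    have hC2 : (0:ℝ) < (m.choose j : ℝ) := by
      exact_mod_cast Nat.choose_pos (by omega)
    have hC3 : (0:ℝ) < (m.choose (j+1) : ℝ) := by
      exact_mod_cast Nat.choose_pos (by omega)
    have hlc : (m.choose (j-1) : ℝ) * (m.choose (j+1) : ℝ) ≤ (m.choose j : ℝ)^2 := by
      exact_mod_cast choose_log_concave m j hj
    rw [div_mul_div_comm, div_pow, div_le_div_iff₀ (by positivity) (by positivity)] at hnorm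
    have h2 : s.esymm (j-1) * s.esymm (j+1) * (m.choose j : ℝ)^2
        ≤ s.esymm j ^ 2 * (m.choose j : ℝ)^2 := by
      calc s.esymm (j-1) * s.esymm (j+1) * (m.choose j : ℝ)^2
          ≤ s.esymm j ^ 2 * ((m.choose (j-1) : ℝ) * (m.choose (j+1) : ℝ)) := by
            rw [sq (((m.choose j : ℕ)) : ℝ)] at hnorm
            nlinarith [hnorm]
        _ ≤ s.esymm j ^ 2 * (m.choose j : ℝ)^2 :=
            mul_le_mul_of_nonneg_left hlc (by positivity)
    exact le_of_mul_le_mul_right h2 (by positivity)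

section Cone
variable {ι : Type*} [DecidableEq ι]

lemma newton_Esym (f : ι → ℝ) (A : Finset ι) (j : ℕ) (hj : 1 ≤ j) :
    Esym f (j-1) A * Esym f (j+1) A ≤ Esym f j A ^ 2 := by
  have h := newton_unnorm (A.val.map f) j hj
  rwa [Finset.esymm_map_val, Finset.esymm_map_val, Finset.esymm_map_val] at h

lemma gamma_erase_nonpos {f : ι → ℝ} {A : Finset ι} {x₀ : ι} (hx₀A : x₀ ∈ A)
    (hx0 : f x₀ ≤ 0) (k : ℕ) (hpos : ∀ j, 1 ≤ j → j ≤ k → 0 < Esym f j A) :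
    ∀ j, j ≤ k → 0 < Esym f j (A.erase x₀) := by
  intro j
  induction j with
  | zero => intro _; rw [Esym_zero]; norm_num
  | succ j ih =>
    intro hjk
    have hA := hpos (j+1) (by omega) hjk
    rw [Esym_erase f j hx₀A] at hA
    have hihj := ih (by omega)
    nlinarith [mul_nonneg (neg_nonneg.2 hx0) hihj.le]

theorem cone_lemma (f : ι → ℝ) :
    ∀ (k : ℕ), 1 ≤ k → ∀ (A : Finset ι), k ≤ A.card →
      (∀ j, 1 ≤ j → j ≤ k → 0 < Esym f j A) →
      ∀ i ∈ A, ∀ j, j < k → 0 < Esym f j (A.erase i) := by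
  intro k
  induction k using Nat.strong_induction_on with
  | _ k ihk =>
  intro hk1
  suffices H : ∀ (m : ℕ) (A : Finset ι), A.card = m → k ≤ A.card →
      (∀ j, 1 ≤ j → j ≤ k → 0 < Esym f j A) →
      ∀ i ∈ A, ∀ j, j < k → 0 < Esym f j (A.erase i) by
    exact fun A hkA hpos => H A.card A rfl hkA hpos
  intro m
  induction m using Nat.strong_induction_on with
  | _ m ihm =>
  intro A hAm hkA hpos i hi j hjk
  rcases Nat.lt_or_ge (j+1) k with hjlt | hjge
  · -- reduce to smaller k
    exact ihk (j+1) hjlt (by omega) A (by omega)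
      (fun j' h1 h2 => hpos j' h1 (by omega)) i hi j (by omega)
  -- now j + 1 = k
  rcases Nat.eq_zero_or_pos j with rfl | hj1
  · rw [Esym_zero]; norm_num
  obtain ⟨r, rfl⟩ : ∃ r, j = r + 1 := ⟨j - 1, by omega⟩
  have hkr : k = r + 2 := by omega
  subst hkr
  -- choose a minimizing element
  obtain ⟨x₀, hx₀A, hx₀min⟩ := Finset.exists_min_image A f ⟨i, hi⟩
  rcases le_or_gt (f x₀) 0 with hx0 | hx0pos
  · -- the nonpositive-min case
    have hB : ∀ j', j' ≤ r + 2 → 0 < Esym f j' (A.erase x₀) :=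
      gamma_erase_nonpos hx₀A hx0 (r+2) hpos
    have hcardB : (A.erase x₀).card = m - 1 := by
      rw [Finset.card_erase_of_mem hx₀A, hAm]
    have hklt : r + 2 < m := by
      rcases Nat.lt_or_ge (r+2) m with h | h
      · exact h
      · exfalso
        have h0 := hB (r+2) le_rfl
        rw [Esym_eq_zero_of_card_lt f (by omega : (A.erase x₀).card < r + 2)] at h0
        exact absurd h0 (by norm_num)
    by_cases hix : i = x₀
    · subst hix
      exact hB (r+1) (by omega)
    · have hiB : i ∈ A.erase x₀ := Finset.mem_erase.2 ⟨hix, hi⟩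
      set B := A.erase x₀ with hBdef
      have hBk : ∀ j' < r + 2, 0 < Esym f j' (B.erase i) :=
        ihm (m-1) (by omega) B hcardB (by omega)
          (fun j' _ h2 => hB j' h2) i hiB
      have hBr : 0 < Esym f r (B.erase i) := hBk r (by omega)
      have hBr1 : 0 < Esym f (r+1) (B.erase i) := hBk (r+1) (by omega)
      have hBf1 : 0 < Esym f (r+1) B := hB (r+1) (by omega)
      have hBf2 : 0 < Esym f (r+2) B := hB (r+2) le_rfl
      have hEkA : 0 < Esym f (r+2) A := hpos (r+2) (by omega) le_rfl
      have idA : Esym f (r+2) A = Esym f (r+2) B + f x₀ * Esym f (r+1) B :=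
        Esym_erase f (r+1) hx₀A
      have h1 : 0 < Esym f (r+2) B + f x₀ * Esym f (r+1) B := idA ▸ hEkA
      have idB1 : Esym f (r+1) B = Esym f (r+1) (B.erase i) + f i * Esym f r (B.erase i) :=
        Esym_erase f r hiB
      have idB2 : Esym f (r+2) B = Esym f (r+2) (B.erase i) + f i * Esym f (r+1) (B.erase i) :=
        Esym_erase f (r+1) hiB
      have newton : Esym f r (B.erase i) * Esym f (r+2) (B.erase i)
          ≤ Esym f (r+1) (B.erase i) ^ 2 := by
        have h := newton_Esym f (B.erase i) (r+1) (by omega)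
        simpa using h
      have hstar : Esym f (r+2) B * Esym f r (B.erase i)
          ≤ Esym f (r+1) (B.erase i) * Esym f (r+1) B := by
        rw [idB1, idB2]
        nlinarith [newton]
      have h3 : -(Esym f (r+2) B) * Esym f r (B.erase i)
          < (f x₀ * Esym f (r+1) B) * Esym f r (B.erase i) :=
        mul_lt_mul_of_pos_right (by linarith) hBr
      have idAi : Esym f (r+1) (A.erase i) = Esym f (r+1) (B.erase i)
          + f x₀ * Esym f r (B.erase i) := by
        have hx₀Ai : x₀ ∈ A.erase i := Finset.mem_erase.2 ⟨fun h => hix h.symm, hx₀A⟩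
        have := Esym_erase f r hx₀Ai
        rwa [Finset.erase_right_comm] at this
      rw [idAi]
      nlinarith [h3, hstar, hBf1]
  · -- all entries positive
    have hposA : ∀ y ∈ A, 0 < f y := fun y hy => lt_of_lt_of_le hx0pos (hx₀min y hy)
    refine Esym_pos (fun y hy => hposA y (Finset.mem_of_mem_erase hy)) ?_
    rw [Finset.card_erase_of_mem hi]
    omega

end Cone

lemma S_eq (n k : ℕ) (x : Fin n → ℝ) :
    S n k x = Esym x k Finset.univ / (n.choose k : ℝ) := rfl

lemma diff_prod {n : ℕ} (t : Finset (Fin n)) (lam : Fin n → ℝ) :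
    DifferentiableAt ℝ (fun x : Fin n → ℝ => ∏ i ∈ t, x i) lam := by
  classical
  induction t using Finset.cons_induction with
  | empty => simpa using differentiableAt_const (1:ℝ)
  | cons a t ha ih =>
    simp only [Finset.prod_cons]
    have h1 : DifferentiableAt ℝ (fun x : Fin n → ℝ => x a) lam := by fun_prop
    exact h1.mul ih

lemma S_differentiable (n k : ℕ) (lam : Fin n → ℝ) :
    DifferentiableAt ℝ (S n k) lam := by
  have h : DifferentiableAt ℝ
      (fun x : Fin n → ℝ => ∑ t ∈ Finset.univ.powersetCard k, ∏ i ∈ t, x i) lam := by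
    apply DifferentiableAt.fun_sum
    intro t _
    exact diff_prod t lam
  show DifferentiableAt ℝ
    (fun x : Fin n → ℝ => (∑ t ∈ Finset.univ.powersetCard k, ∏ i ∈ t, x i) / (n.choose k : ℝ)) lam
  simp only [div_eq_mul_inv]
  exact h.mul_const _

lemma update_line {n : ℕ} (lam : Fin n → ℝ) (i : Fin n) (t : ℝ) :
    lam + t • (Pi.single i 1 : Fin n → ℝ) = Function.update lam i (lam i + t) := by
  funext y
  by_cases h : y = i
  · subst h
    simp
  · simp [h, Function.update_of_ne h]

lemma Esym_update_not_mem {n : ℕ} (lam : Fin n → ℝ) (i : Fin n) (c : ℝ) (j : ℕ)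
    {A : Finset (Fin n)} (hA : i ∉ A) :
    Esym (Function.update lam i c) j A = Esym lam j A :=
  Esym_congr j A (fun y hy => Function.update_of_ne (fun h : y = i => hA (by rwa [h] at hy)) _ _)

lemma fderiv_S_apply (n : ℕ) (r : ℕ) (lam : Fin n → ℝ) (i : Fin n) :
    fderiv ℝ (S n (r+1)) lam (Pi.single i 1)
      = Esym lam r (Finset.univ.erase i) / (n.choose (r+1) : ℝ) := by
  classical
  set C : ℝ := (n.choose (r+1) : ℝ) with hC
  set v : Fin n → ℝ := Pi.single i 1 with hv
  have hdiff := S_differentiable n (r+1) lam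
  have hline : HasDerivAt (fun t : ℝ => lam + t • v) v 0 := by
    have h1 : HasDerivAt (fun t : ℝ => t • v) ((1:ℝ) • v) 0 := (hasDerivAt_id 0).smul_const _
    simpa using h1.const_add lam
  have h0 : lam + (0:ℝ) • v = lam := by simp
  have hcomp : HasDerivAt (fun t : ℝ => S n (r+1) (lam + t • v))
      (fderiv ℝ (S n (r+1)) lam v) 0 := by
    have hF : HasFDerivAt (S n (r+1)) (fderiv ℝ (S n (r+1)) lam) (lam + (0:ℝ) • v) := by
      rw [h0]
      exact hdiff.hasFDerivAt
    have hc := HasFDerivAt.comp_hasDerivAt 0 hF hline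
    simpa [Function.comp_def] using hc
  have hfun : (fun t : ℝ => S n (r+1) (lam + t • v))
      = fun t : ℝ => (Esym lam (r+1) (Finset.univ.erase i)
          + (lam i + t) * Esym lam r (Finset.univ.erase i)) / C := by
    funext t
    rw [hv, update_line, S_eq,
      Esym_erase (Function.update lam i (lam i + t)) r (Finset.mem_univ i),
      Esym_update_not_mem lam i _ (r+1) (Finset.notMem_erase i _),
      Esym_update_not_mem lam i _ r (Finset.notMem_erase i _),
      Function.update_self]
  have hg : HasDerivAt (fun t : ℝ => (Esym lam (r+1) (Finset.univ.erase i)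
        + (lam i + t) * Esym lam r (Finset.univ.erase i)) / C)
      (Esym lam r (Finset.univ.erase i) / C) 0 := by
    have h1 : HasDerivAt (fun t : ℝ => lam i + t) 1 0 := (hasDerivAt_id 0).const_add (lam i)
    have h2 := ((h1.mul_const (Esym lam r (Finset.univ.erase i))).const_add
      (Esym lam (r+1) (Finset.univ.erase i))).div_const C
    simpa using h2
  rw [hfun] at hcomp
  exact hcomp.unique hg

theorem partial_Sk_antitone (n k : ℕ) (hk1 : 1 ≤ k) (hkn : k ≤ n)
    (lam : Fin n → ℝ) (hlam : lam ∈ Gamma n k)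
    (hsort : ∀ i j : Fin n, i ≤ j → lam j ≤ lam i) :
    ∀ i j : Fin n, i ≤ j →
      fderiv ℝ (S n k) lam (Pi.single i 1) ≤ fderiv ℝ (S n k) lam (Pi.single j 1) := by
  obtain ⟨r, rfl⟩ : ∃ r, k = r + 1 := ⟨k-1, by omega⟩
  intro i j hij
  rw [fderiv_S_apply n r lam i, fderiv_S_apply n r lam j]
  have hC : (0:ℝ) < (n.choose (r+1) : ℝ) := by exact_mod_cast Nat.choose_pos hkn
  have main : Esym lam r (Finset.univ.erase i) ≤ Esym lam r (Finset.univ.erase j) := by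
    rcases eq_or_ne i j with rfl | hne
    · exact le_refl _
    rcases Nat.eq_zero_or_pos r with rfl | hr
    · rw [Esym_zero, Esym_zero]
    obtain ⟨q, rfl⟩ : ∃ q, r = q + 1 := ⟨r-1, by omega⟩
    have hpos : ∀ j', 1 ≤ j' → j' ≤ q+2 → 0 < Esym lam j' Finset.univ := by
      intro j' h1 h2
      have hS := hlam j' h1 (by omega)
      rw [S_eq] at hS
      have hCj : (0:ℝ) < (n.choose j' : ℝ) := by
        exact_mod_cast Nat.choose_pos (by omega)
      have hmul := mul_pos hS hCj
      rwa [div_mul_cancel₀ _ hCj.ne'] at hmul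
    have hcardu : (Finset.univ : Finset (Fin n)).card = n := by simp
    have h1 : ∀ j' < q+2, 0 < Esym lam j' (Finset.univ.erase j) :=
      cone_lemma lam (q+2) (by omega) Finset.univ (by omega) hpos j (Finset.mem_univ j)
    have hcard2 : (Finset.univ.erase j).card = n - 1 := by
      rw [Finset.card_erase_of_mem (Finset.mem_univ j), hcardu]
    have h2 : ∀ j' < q+1, 0 < Esym lam j' ((Finset.univ.erase j).erase i) :=
      cone_lemma lam (q+1) (by omega) (Finset.univ.erase j) (by omega)
        (fun j' ha hb => h1 j' (by omega)) i
        (Finset.mem_erase.2 ⟨hne, Finset.mem_univ i⟩)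
    have hD : 0 < Esym lam q ((Finset.univ.erase j).erase i) := h2 q (by omega)
    have idI : Esym lam (q+1) (Finset.univ.erase i)
        = Esym lam (q+1) ((Finset.univ.erase i).erase j)
          + lam j * Esym lam q ((Finset.univ.erase i).erase j) :=
      Esym_erase lam q (Finset.mem_erase.2 ⟨hne.symm, Finset.mem_univ j⟩)
    have idJ : Esym lam (q+1) (Finset.univ.erase j)
        = Esym lam (q+1) ((Finset.univ.erase j).erase i)
          + lam i * Esym lam q ((Finset.univ.erase j).erase i) :=
      Esym_erase lam q (Finset.mem_erase.2 ⟨hne, Finset.mem_univ i⟩)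
    rw [idI, idJ, Finset.erase_right_comm (s := Finset.univ) (a := i) (b := j)]
    have hlam_ij : lam j ≤ lam i := hsort i j hij
    nlinarith [mul_le_mul_of_nonneg_right hlam_ij hD.le]
  exact (div_le_div_iff_of_pos_right hC).2 main
end

section
/- If λ = (λ₁,…,λₙ) ∈ Γ_k with λ₁ ≥ λ₂ ≥ ⋯ ≥ λₙ, then λ₁ · ∂S_k/∂λ₁ (λ) ≥ (k/n) · S_k(λ). -/
open Multiset Polynomial

namespace NewtonAux

lemma esymm_zero' (s : Multiset ℝ) : s.esymm 0 = 1 := by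
  simp [Multiset.esymm, Multiset.powersetCard_zero_left]

lemma esymm_eq_zero {s : Multiset ℝ} {k : ℕ} (h : Multiset.card s < k) : s.esymm k = 0 := by
  simp [Multiset.esymm, Multiset.powersetCard_eq_empty _ h]

lemma esymm_cons (a : ℝ) (s : Multiset ℝ) (k : ℕ) :
    (a ::ₘ s).esymm (k + 1) = s.esymm (k + 1) + a * s.esymm k := by
  simp only [Multiset.esymm, Multiset.powersetCard_cons, Multiset.map_add, Multiset.sum_add,
    Multiset.map_map, Function.comp_def, Multiset.prod_cons]
  rw [Multiset.sum_map_mul_left]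

lemma esymm_card (s : Multiset ℝ) : s.esymm (Multiset.card s) = s.prod := by
  induction s using Multiset.induction with
  | empty => simp [esymm_zero']
  | cons a s ih =>
    rw [Multiset.card_cons, esymm_cons, ih, esymm_eq_zero (by simp), Multiset.prod_cons]
    ring

lemma esymm_erase {s : Multiset ℝ} {a : ℝ} (ha : a ∈ s) (k : ℕ) :
    s.esymm (k + 1) = (s.erase a).esymm (k + 1) + a * (s.erase a).esymm k := by
  conv_lhs => rw [← Multiset.cons_erase ha]
  rw [esymm_cons]


lemma esymm_empty (k : ℕ) : (0 : Multiset ℝ).esymm (k + 1) = 0 :=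
  esymm_eq_zero (by simp)

lemma esymm_one' (s : Multiset ℝ) : s.esymm 1 = s.sum := by
  induction s using Multiset.induction with
  | empty => simp [esymm_empty]
  | cons a s ih => rw [esymm_cons, ih, esymm_zero', Multiset.sum_cons]; ring

-- G1
lemma sum_esymm_erase (s : Multiset ℝ) (k : ℕ) :
    (s.map (fun a => (s.erase a).esymm k)).sum = ((Multiset.card s : ℝ) - k) * s.esymm k := by
  induction s using Multiset.induction generalizing k with
  | empty =>
    cases k with
    | zero => simp [esymm_zero']
    | succ k => simp [esymm_empty]
  | cons a s ih =>
    rw [Multiset.map_cons, Multiset.sum_cons, Multiset.erase_cons_head]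
    have hmap : (s.map fun x => ((a ::ₘ s).erase x).esymm k) =
        s.map fun x => (a ::ₘ s.erase x).esymm k :=
      Multiset.map_congr rfl fun x hx => by rw [Multiset.erase_cons_tail_of_mem hx]
    rw [hmap]
    cases k with
    | zero =>
      simp only [esymm_zero']
      rw [Multiset.map_const', Multiset.sum_replicate]
      simp
      ring
    | succ k =>
      have hmap2 : (s.map fun x => (a ::ₘ s.erase x).esymm (k + 1)) =
          s.map fun x => (s.erase x).esymm (k + 1) + a * (s.erase x).esymm k :=
        Multiset.map_congr rfl fun x _ => by rw [esymm_cons]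
      rw [hmap2, Multiset.sum_map_add, Multiset.sum_map_mul_left, ih, ih, esymm_cons,
        Multiset.card_cons]
      push_cast
      ring

-- G2
lemma sum_mul_esymm_erase (s : Multiset ℝ) (k : ℕ) :
    (s.map (fun a => a * (s.erase a).esymm k)).sum = ((k : ℝ) + 1) * s.esymm (k + 1) := by
  induction s using Multiset.induction generalizing k with
  | empty => simp [esymm_empty]
  | cons a s ih =>
    rw [Multiset.map_cons, Multiset.sum_cons, Multiset.erase_cons_head]
    have hmap : (s.map fun x => x * ((a ::ₘ s).erase x).esymm k) =
        s.map fun x => x * (a ::ₘ s.erase x).esymm k :=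
      Multiset.map_congr rfl fun x hx => by rw [Multiset.erase_cons_tail_of_mem hx]
    rw [hmap]
    cases k with
    | zero =>
      have h2 : (s.map fun x => x * (a ::ₘ s.erase x).esymm 0) = s.map id :=
        Multiset.map_congr rfl fun x _ => by rw [esymm_zero', mul_one, id]
      rw [h2, Multiset.map_id, esymm_cons, esymm_one', esymm_zero']
      push_cast
      ring
    | succ k =>
      have hmap2 : (s.map fun x => x * (a ::ₘ s.erase x).esymm (k + 1)) =
          s.map fun x => x * (s.erase x).esymm (k + 1) + a * (x * (s.erase x).esymm k) :=
        Multiset.map_congr rfl fun x _ => by rw [esymm_cons]; ring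
      rw [hmap2, Multiset.sum_map_add, Multiset.sum_map_mul_left, ih, ih,
        esymm_cons (a) (s) (k+1)]
      push_cast
      ring

-- SW
lemma sum_sum_erase (s : Multiset ℝ) (h : ℝ → ℝ) :
    (s.map (fun a => ((s.erase a).map h).sum)).sum
      = ((Multiset.card s : ℝ) - 1) * (s.map h).sum := by
  induction s using Multiset.induction with
  | empty => simp
  | cons a s ih =>
    rw [Multiset.map_cons, Multiset.sum_cons, Multiset.erase_cons_head]
    have hmap : (s.map fun x => (((a ::ₘ s).erase x).map h).sum) =
        s.map fun x => h a + ((s.erase x).map h).sum :=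
      Multiset.map_congr rfl fun x hx => by
        rw [Multiset.erase_cons_tail_of_mem hx, Multiset.map_cons, Multiset.sum_cons]
    rw [hmap, Multiset.sum_map_add, ih, Multiset.map_const', Multiset.sum_replicate,
      Multiset.map_cons, Multiset.sum_cons, Multiset.card_cons]
    push_cast
    ring


lemma sum_map_le {s : Multiset ℝ} {f g : ℝ → ℝ} (h : ∀ a ∈ s, f a ≤ g a) :
    (s.map f).sum ≤ (s.map g).sum := by
  induction s using Multiset.induction with
  | empty => simp
  | cons a s ih =>
    simp only [Multiset.map_cons, Multiset.sum_cons]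
    exact add_le_add (h a (Multiset.mem_cons_self a s))
      (ih fun x hx => h x (Multiset.mem_cons_of_mem hx))

lemma mem_erase_symm {s : Multiset ℝ} {a b : ℝ} (ha : a ∈ s) (hb : b ∈ s.erase a) :
    a ∈ s.erase b := by
  by_cases hab : a = b
  · subst hab; exact hb
  · exact (Multiset.mem_erase_of_ne hab).mpr ha

lemma prod_erase_mul {s : Multiset ℝ} {a b : ℝ} (ha : a ∈ s) (hb : b ∈ s.erase a) :
    (s.erase a).prod * (s.erase b).prod = s.prod * ((s.erase a).erase b).prod := by
  have h1 : (s.erase a).prod = b * ((s.erase a).erase b).prod := by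
    conv_lhs => rw [← Multiset.cons_erase hb]
    rw [Multiset.prod_cons]
  have h2 : (s.erase b).prod = a * ((s.erase b).erase a).prod := by
    conv_lhs => rw [← Multiset.cons_erase (mem_erase_symm ha hb)]
    rw [Multiset.prod_cons]
  have h3 : s.prod = a * (s.erase a).prod := by
    conv_lhs => rw [← Multiset.cons_erase ha]
    rw [Multiset.prod_cons]
  have hQ : ((s.erase b).erase a).prod = ((s.erase a).erase b).prod := by
    rw [Multiset.erase_comm]
  rw [h1, h2, hQ, h3, h1]
  ring

/-- Top case of Newton's inequality. -/
lemma newton_top (s : Multiset ℝ) (j : ℕ) (hcard : Multiset.card s = j + 2) :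
    2 * ((j : ℝ) + 2) * (s.esymm j * s.prod) ≤ ((j : ℝ) + 1) * s.esymm (j + 1) ^ 2 := by
  set P : ℝ → ℝ := fun a => (s.erase a).prod with hP
  -- A : sum of P over s is esymm (j+1)
  have hA : (s.map P).sum = s.esymm (j + 1) := by
    have h1 : s.map P = s.map fun a => (s.erase a).esymm (j + 1) :=
      Multiset.map_congr rfl fun a ha => by
        rw [hP]
        have : Multiset.card (s.erase a) = j + 1 := by
          rw [Multiset.card_erase_of_mem ha, hcard]; rfl
        rw [← this, esymm_card]
    rw [h1, sum_esymm_erase, hcard]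
    push_cast; ring
  -- D : the off-diagonal double sum
  have hD : (s.map (fun a => ((s.erase a).map (fun b => P a * P b)).sum)).sum
      = 2 * (s.prod * s.esymm j) := by
    have h1 : (s.map (fun a => ((s.erase a).map (fun b => P a * P b)).sum)) =
        s.map fun a => s.prod * (s.erase a).esymm j := by
      refine Multiset.map_congr rfl fun a ha => ?_
      have hinner : (s.erase a).map (fun b => P a * P b) =
          (s.erase a).map fun b => s.prod * ((s.erase a).erase b).esymm j := by
        refine Multiset.map_congr rfl fun b hb => ?_
        have hcard2 : Multiset.card ((s.erase a).erase b) = j := by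
          rw [Multiset.card_erase_of_mem hb, Multiset.card_erase_of_mem ha, hcard]; rfl
        rw [hP, ← hcard2, esymm_card, prod_erase_mul ha hb]
      rw [hinner, Multiset.sum_map_mul_left]
      have hce : Multiset.card (s.erase a) = j + 1 := by
        rw [Multiset.card_erase_of_mem ha, hcard]; rfl
      rw [sum_esymm_erase (s.erase a) j, hce]
      push_cast; ring
    rw [h1, Multiset.sum_map_mul_left, sum_esymm_erase, hcard]
    push_cast; ring
  -- CS : bound the double sum by the diagonal
  have hCS : (s.map (fun a => ((s.erase a).map (fun b => P a * P b)).sum)).sum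
      ≤ ((j : ℝ) + 1) * (s.map (fun a => P a ^ 2)).sum := by
    have step1 : ∀ a ∈ s, ((s.erase a).map (fun b => P a * P b)).sum ≤
        ((s.erase a).map (fun b => P a ^ 2 / 2 + P b ^ 2 / 2)).sum := by
      intro a _
      exact sum_map_le fun b _ => by nlinarith [sq_nonneg (P a - P b)]
    have step2 : (s.map (fun a => ((s.erase a).map (fun b => P a * P b)).sum)).sum ≤
        (s.map (fun a => ((s.erase a).map (fun b => P a ^ 2 / 2 + P b ^ 2 / 2)).sum)).sum :=
      sum_map_le step1
    refine step2.trans ?_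
    have hsplit : (s.map (fun a => ((s.erase a).map (fun b => P a ^ 2 / 2 + P b ^ 2 / 2)).sum)) =
        s.map (fun a => ((j : ℝ) + 1) * (P a ^ 2 / 2) + ((s.erase a).map (fun b => P b ^ 2 / 2)).sum) := by
      refine Multiset.map_congr rfl fun a ha => ?_
      have hce : Multiset.card (s.erase a) = j + 1 := by
        rw [Multiset.card_erase_of_mem ha, hcard]; rfl
      rw [Multiset.sum_map_add, Multiset.map_const', Multiset.sum_replicate, hce]
      push_cast [nsmul_eq_mul]
      ring
    rw [hsplit, Multiset.sum_map_add, Multiset.sum_map_mul_left,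
      sum_sum_erase s (fun b => P b ^ 2 / 2), hcard]
    have e1 : (s.map fun a => P a ^ 2 / 2).sum = (s.map fun a => P a ^ 2).sum / 2 := by
      rw [div_eq_mul_inv, ← Multiset.sum_map_mul_right]
      simp [div_eq_mul_inv]
    rw [e1]
    push_cast
    ring_nf
    have hPP : (0:ℝ) ≤ (s.map fun a => P a ^ 2).sum := by
      have := sum_map_le (s := s) (f := fun _ => (0:ℝ)) (g := fun a => P a ^ 2)
        (fun a _ => sq_nonneg _)
      simpa using this
    nlinarith [hPP]
  -- SQ : expansion of the square
  have hSQ : (s.map P).sum ^ 2 = (s.map fun a => P a ^ 2).sum +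
      (s.map (fun a => ((s.erase a).map (fun b => P a * P b)).sum)).sum := by
    have h1 : (s.map P).sum ^ 2 = (s.map fun a => P a * (s.map P).sum).sum := by
      rw [Multiset.sum_map_mul_right]; ring
    rw [h1, ← Multiset.sum_map_add]
    refine congrArg _ (Multiset.map_congr rfl fun a ha => ?_)
    have hsum : (s.map P).sum = P a + ((s.erase a).map P).sum := by
      conv_lhs => rw [← Multiset.cons_erase ha]
      rw [Multiset.map_cons, Multiset.sum_cons]
    rw [hsum, mul_add, ← Multiset.sum_map_mul_left]
    ring
  have hA2 : s.esymm (j + 1) ^ 2 = (s.map P).sum ^ 2 := by rw [hA]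
  nlinarith [hA2, hD, hCS, hSQ]


/-- Differentiation step: there is a multiset of one fewer reals with the same
normalized elementary symmetric functions. -/
lemma deriv_step (s : Multiset ℝ) (hs : 1 ≤ Multiset.card s) :
    ∃ t : Multiset ℝ, Multiset.card t = Multiset.card s - 1 ∧
      ∀ j, j ≤ Multiset.card s - 1 →
        (Multiset.card s : ℝ) * t.esymm j = ((Multiset.card s : ℝ) - j) * s.esymm j := by
  set m := Multiset.card s with hm
  set p : ℝ[X] := (s.map fun a => X - C a).prod with hp
  have hmonic : p.Monic := monic_multiset_prod_of_monic _ _ fun a _ => monic_X_sub_C a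
  have hdeg : p.natDegree = m := by
    rw [hp, natDegree_multiset_prod_X_sub_C_eq_card]
  have hroots : p.roots = s := roots_multiset_prod_X_sub_C s
  set q := derivative p with hq
  have hcq : q.coeff (m - 1) = m := by
    rw [hq, coeff_derivative]
    have h1 : m - 1 + 1 = m := Nat.succ_pred_eq_of_pos hs
    rw [h1]
    have h2 : p.coeff m = 1 := by
      have := hmonic.leadingCoeff
      rwa [leadingCoeff, hdeg] at this
    rw [h2, one_mul]
    push_cast [Nat.cast_sub hs]
    ring
  have hmpos : (0:ℝ) < m := by exact_mod_cast hs
  have hq0 : q ≠ 0 := by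
    intro h
    rw [h, coeff_zero] at hcq
    linarith
  have hqd : q.natDegree = m - 1 := by
    refine le_antisymm (hdeg ▸ natDegree_derivative_le p) (le_natDegree_of_ne_zero ?_)
    rw [hcq]
    exact ne_of_gt hmpos
  have hcard : Multiset.card q.roots = m - 1 := by
    refine le_antisymm (hqd ▸ card_roots' q) ?_
    have h1 := card_roots_le_derivative p
    rw [hroots, ← hq] at h1
    omega
  refine ⟨q.roots, hcard, ?_⟩
  intro j hj
  have hjm : j ≤ m := le_trans hj (Nat.sub_le m 1)
  have hidx : m - 1 - j + 1 = m - j := by omega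
  have h1 : q.coeff (m - 1 - j) = p.coeff (m - j) * (m - j : ℕ) := by
    rw [hq, coeff_derivative, hidx]
    push_cast [Nat.cast_sub hjm, Nat.cast_sub (show j + 1 ≤ m by omega),
      show m - 1 - j = m - (j + 1) from by omega]
    ring
  have h2 : p.coeff (m - j) = (-1) ^ j * s.esymm j := by
    have := Multiset.prod_X_sub_C_coeff s (show m - j ≤ Multiset.card s from by omega)
    rw [← hp, ← hm, show m - (m - j) = j from by omega] at this
    exact this
  have h3 : q.coeff (m - 1 - j) = q.leadingCoeff * (-1) ^ j * q.roots.esymm j := by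
    have hle : m - 1 - j ≤ q.natDegree := by omega
    have := coeff_eq_esymm_roots_of_card (hcard.trans hqd.symm) hle
    rw [hqd] at this
    have hsub : m - 1 - (m - 1 - j) = j := by omega
    rwa [hsub] at this
  have hL : q.leadingCoeff = m := by rw [leadingCoeff, hqd, hcq]
  rw [h3, hL, h2] at h1
  have hcast : ((m - j : ℕ) : ℝ) = (m : ℝ) - j := by
    push_cast [Nat.cast_sub hjm]
    ring
  rw [hcast] at h1
  have hx : ((-1:ℝ) ^ j) ^ 2 = 1 := by
    rw [← pow_mul, mul_comm, pow_mul]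
    norm_num
  linear_combination ((-1:ℝ)^j) * h1 +
    (((m:ℝ) - j) * s.esymm j - (m:ℝ) * q.roots.esymm j) * hx


lemma choose_id (m i : ℕ) (hm : 1 ≤ m) : m * (m - 1).choose i = m.choose i * (m - i) := by
  obtain ⟨m', rfl⟩ : ∃ m', m = m' + 1 := ⟨m - 1, by omega⟩
  simp only [Nat.add_sub_cancel]
  rw [Nat.add_one_mul_choose_eq, Nat.choose_succ_right_eq]

lemma transfer {n i : ℕ} (hn : 1 ≤ n) (hi : i ≤ n - 1) (Es Et : ℝ)
    (h : (n : ℝ) * Et = ((n : ℝ) - i) * Es) :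
    Es / (n.choose i) = Et / ((n - 1).choose i) := by
  have hin : i ≤ n := le_trans hi (Nat.sub_le n 1)
  have hC : (0:ℝ) < (n.choose i : ℝ) := by exact_mod_cast Nat.choose_pos hin
  have hC' : (0:ℝ) < ((n - 1).choose i : ℝ) := by exact_mod_cast Nat.choose_pos hi
  have hnR : (0:ℝ) < (n:ℝ) := by exact_mod_cast hn
  have hcR : (n:ℝ) * ((n - 1).choose i : ℝ) = (n.choose i : ℝ) * ((n:ℝ) - i) := by
    have := choose_id n i hn
    have := congrArg (fun x : ℕ => (x : ℝ)) this
    push_cast [Nat.cast_sub hin] at this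
    linarith
  rw [div_eq_div_iff (ne_of_gt hC) (ne_of_gt hC')]
  have key : (n:ℝ) * (Es * ((n - 1).choose i : ℝ)) = (n:ℝ) * (Et * (n.choose i : ℝ)) := by
    linear_combination Es * hcR - (n.choose i : ℝ) * h
  exact mul_left_cancel₀ (ne_of_gt hnR) key

lemma choose_two (j : ℕ) : 2 * ((j + 2).choose j) = (j + 2) * (j + 1) := by
  have h1 : (j + 2).choose j = (j + 2).choose 2 := by
    have := Nat.choose_symm (show 2 ≤ j + 2 by omega)
    rwa [show j + 2 - 2 = j from by omega] at this
  have h2 : (j + 2).choose 2 * 2 = (j + 2).choose 1 * (j + 2 - 1) :=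
    Nat.choose_succ_right_eq (j + 2) 1
  rw [h1]
  simp [Nat.choose_one_right] at h2
  omega

theorem newton_aux : ∀ n : ℕ, ∀ s : Multiset ℝ, Multiset.card s = n → ∀ j : ℕ, j + 2 ≤ n →
    s.esymm j / (n.choose j) * (s.esymm (j + 2) / (n.choose (j + 2)))
      ≤ (s.esymm (j + 1) / (n.choose (j + 1))) ^ 2 := by
  intro n
  induction n using Nat.strong_induction_on with
  | _ n ih =>
    intro s hs j hj
    rcases eq_or_lt_of_le hj with heq | hlt
    · -- top case : n = j + 2
      subst heq
      have hprod : s.esymm (j + 2) = s.prod := by rw [← hs, esymm_card]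
      have htop := newton_top s j hs
      have hCj : (0:ℝ) < ((j + 2).choose j : ℝ) := by
        exact_mod_cast Nat.choose_pos (by omega)
      have hC2 : 2 * ((j + 2).choose j : ℝ) = ((j:ℝ) + 2) * ((j:ℝ) + 1) := by
        exact_mod_cast congrArg (fun x : ℕ => (x:ℝ)) (choose_two j)
      rw [hprod, Nat.choose_self, show j + 2 = j + 1 + 1 from rfl,
        Nat.choose_succ_self_right, Nat.cast_one, div_one]
      rw [div_pow, div_mul_eq_mul_div, div_le_div_iff₀ hCj (by positivity)]
      push_cast
      nlinarith [mul_le_mul_of_nonneg_left htop (show (0:ℝ) ≤ (j:ℝ) + 2 by positivity), hC2,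
        sq_nonneg (s.esymm (j+1))]
    · -- inductive step
      have hn1 : 1 ≤ n := by omega
      obtain ⟨t, hct, htrans⟩ := deriv_step s (by omega)
      rw [hs] at hct htrans
      have e : ∀ i, i ≤ n - 1 → s.esymm i / (n.choose i) = t.esymm i / ((n - 1).choose i) :=
        fun i hi => transfer hn1 hi _ _ (htrans i hi)
      rw [e j (by omega), e (j + 1) (by omega), e (j + 2) (by omega)]
      exact ih (n - 1) (by omega) t hct j (by omega)


lemma esymm_nonneg {s : Multiset ℝ} (h : ∀ x ∈ s, 0 ≤ x) (k : ℕ) : 0 ≤ s.esymm k := by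
  induction s using Multiset.induction generalizing k with
  | empty => cases k with
    | zero => simp [esymm_zero']
    | succ k => simp [esymm_empty]
  | cons a s ih =>
    cases k with
    | zero => simp [esymm_zero']
    | succ k =>
      rw [esymm_cons]
      have ha : 0 ≤ a := h a (Multiset.mem_cons_self a s)
      have h' : ∀ x ∈ s, 0 ≤ x := fun x hx => h x (Multiset.mem_cons_of_mem hx)
      have := ih h' (k + 1); have := ih h' k
      positivity

lemma esymm_pos {s : Multiset ℝ} (h : ∀ x ∈ s, 0 < x) {k : ℕ} (hk : k ≤ Multiset.card s) :
    0 < s.esymm k := by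
  induction s using Multiset.induction generalizing k with
  | empty =>
    obtain rfl : k = 0 := by simpa using hk
    simp [esymm_zero']
  | cons a s ih =>
    cases k with
    | zero => simp [esymm_zero']
    | succ k =>
      rw [esymm_cons]
      have ha : 0 < a := h a (Multiset.mem_cons_self a s)
      have h' : ∀ x ∈ s, 0 < x := fun x hx => h x (Multiset.mem_cons_of_mem hx)
      have h1 : 0 < a * s.esymm k := by
        have := ih h' (show k ≤ Multiset.card s by
          have := Multiset.card_cons a s; omega)
        positivity
      have h2 : 0 ≤ s.esymm (k + 1) := esymm_nonneg (fun x hx => (h' x hx).le) _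
      linarith

/-- Derivative of the shifted elementary symmetric function. -/
lemma hasDerivAt_esymm_shift (s : Multiset ℝ) (j : ℕ) (t : ℝ) :
    HasDerivAt (fun u => (s.map (· + u)).esymm (j + 1))
      (((Multiset.card s : ℝ) - j) * (s.map (· + t)).esymm j) t := by
  induction s using Multiset.induction generalizing j with
  | empty =>
    have hfun : (fun u => ((0 : Multiset ℝ).map (· + u)).esymm (j + 1)) = fun _ => (0:ℝ) := by
      funext u; simp [esymm_empty]
    rw [hfun]
    have hval : ((Multiset.card (0 : Multiset ℝ) : ℝ) - j) * ((0 : Multiset ℝ).map (· + t)).esymm j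
        = 0 := by
      cases j with
      | zero => simp
      | succ j => simp [esymm_empty]
    rw [hval]
    exact hasDerivAt_const t 0
  | cons a s ih =>
    have hfun : (fun u => (((a ::ₘ s)).map (· + u)).esymm (j + 1)) =
        fun u => (s.map (· + u)).esymm (j + 1) + (a + u) * (s.map (· + u)).esymm j := by
      funext u; rw [Multiset.map_cons, esymm_cons]
    rw [hfun]
    cases j with
    | zero =>
      have h2 : HasDerivAt (fun u => (a + u) * (s.map (· + u)).esymm 0) 1 t := by
        have hconst : (fun u => (a + u) * (s.map (· + u)).esymm 0) = fun u => a + u := by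
          funext u; rw [esymm_zero', mul_one]
        rw [hconst]
        simpa using (hasDerivAt_id t).const_add a
      have h1 := ih 0 
      have := h1.add h2
      refine this.congr_deriv ?_
      rw [Multiset.card_cons, esymm_zero', esymm_zero']
      push_cast
      ring
    | succ j =>
      have h2 : HasDerivAt (fun u => (a + u) * (s.map (· + u)).esymm (j + 1))
          (1 * (s.map (· + t)).esymm (j + 1) +
            (a + t) * (((Multiset.card s : ℝ) - j) * (s.map (· + t)).esymm j)) t := by
        exact ((hasDerivAt_id t).const_add a).mul (ih j)
      have := (ih (j + 1)).add h2
      refine this.congr_deriv ?_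
      rw [Multiset.card_cons, Multiset.map_cons, esymm_cons]
      push_cast
      ring

lemma continuous_esymm_shift (s : Multiset ℝ) (j : ℕ) :
    Continuous (fun u => (s.map (· + u)).esymm j) := by
  cases j with
  | zero => simpa [esymm_zero'] using continuous_const
  | succ j =>
    refine continuous_iff_continuousAt.mpr fun t => ?_
    exact (hasDerivAt_esymm_shift s j t).differentiableAt.continuousAt

lemma map_add_zero (s : Multiset ℝ) : s.map (· + (0:ℝ)) = s := by
  simp

/-- Positivity is preserved along the shift path. -/
lemma shift_pos (s : Multiset ℝ) (K : ℕ) (hK : ∀ j, 1 ≤ j → j ≤ K → 0 < s.esymm j)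
    (hKc : K ≤ Multiset.card s) :
    ∀ t : ℝ, 0 ≤ t → ∀ j, 1 ≤ j → j ≤ K → 0 < (s.map (· + t)).esymm j := by
  intro t ht j
  induction j using Nat.strong_induction_on generalizing t with
  | _ j ihj =>
    intro hj1 hjK
    obtain ⟨j', rfl⟩ : ∃ j'', j = j'' + 1 := ⟨j - 1, by omega⟩
    set g : ℝ → ℝ := fun u => (s.map (· + u)).esymm (j' + 1) with hg
    have hg0 : 0 < g 0 := by
      rw [hg]; simp only [map_add_zero]; exact hK _ hj1 hjK
    rcases eq_or_lt_of_le ht with rfl | htpos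
    · exact hg0
    have hmono : StrictMonoOn g (Set.Ici (0:ℝ)) := by
      refine strictMonoOn_of_deriv_pos (convex_Ici 0) ((continuous_esymm_shift s (j' + 1)).continuousOn) ?_
      intro u hu
      rw [interior_Ici] at hu
      rw [(hasDerivAt_esymm_shift s j' u).deriv]
      have hcoeff : (0:ℝ) < (Multiset.card s : ℝ) - j' := by
        have : j' + 1 ≤ Multiset.card s := le_trans hjK hKc
        have : (j' + 1 : ℝ) ≤ (Multiset.card s : ℝ) := by exact_mod_cast this
        linarith
      have hpos : 0 < (s.map (· + u)).esymm j' := by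
        cases j' with
        | zero => simp [esymm_zero']
        | succ i => exact ihj (i + 1) (by omega) u (le_of_lt hu) (by omega) (by omega)
      positivity
    have := hmono (Set.self_mem_Ici) (Set.mem_Ici.mpr ht) htpos
    linarith

/-- Key lemma: for `λ ∈ Γ_{k+1}`, the `k`-th elementary symmetric function with
one entry removed is positive. -/
lemma gamma_erase_pos : ∀ (k : ℕ) (s : Multiset ℝ) (a : ℝ), a ∈ s →
    (∀ j, 1 ≤ j → j ≤ k + 1 → 0 < s.esymm j) → k + 1 ≤ Multiset.card s →
    0 < (s.erase a).esymm k := by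
  intro k
  induction k using Nat.strong_induction_on with
  | _ k ihk =>
    intro s a ha hpos hcard
    cases k with
    | zero => simp [esymm_zero']
    | succ k' =>
      set k := k' + 1 with hk
      by_contra hcon
      push_neg at hcon
      -- choose a large shift T
      set T : ℝ := 1 + (s.map (fun b => |b|)).sum with hT
      have habs : ∀ b ∈ s, |b| ≤ (s.map (fun b => |b|)).sum := by
        intro b hb
        exact Multiset.single_le_sum (fun x hx => by
          obtain ⟨c, _, rfl⟩ := Multiset.mem_map.mp hx; positivity) _
          (Multiset.mem_map_of_mem _ hb)
      have hTpos : ∀ b ∈ s, 0 < b + T := by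
        intro b hb
        have h1 := habs b hb
        have h2 := abs_nonneg b
        have h3 := neg_abs_le b
        rw [hT]; linarith
      have hT0 : (0:ℝ) ≤ T := by
        have := (s.map (fun b => |b|)).sum
        have habs0 : (0:ℝ) ≤ (s.map (fun b => |b|)).sum :=
          Multiset.sum_nonneg (fun x hx => by
            obtain ⟨c, _, rfl⟩ := Multiset.mem_map.mp hx; positivity)
        rw [hT]; linarith
      set g : ℝ → ℝ := fun u => ((s.erase a).map (· + u)).esymm k with hg
      have hg0 : g 0 ≤ 0 := by rw [hg]; simpa [map_add_zero] using hcon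
      have hgT : 0 < g T := by
        refine esymm_pos ?_ ?_
        · intro x hx
          obtain ⟨b, hb, rfl⟩ := Multiset.mem_map.mp hx
          exact hTpos b (Multiset.mem_of_mem_erase hb)
        · rw [Multiset.card_map, Multiset.card_erase_of_mem ha, Nat.pred_eq_sub_one]
          omega
      -- IVT
      obtain ⟨t0, ht0mem, ht0⟩ : ∃ t0 ∈ Set.Icc (0:ℝ) T, g t0 = 0 := by
        have hcont : ContinuousOn g (Set.Icc 0 T) := (continuous_esymm_shift _ k).continuousOn
        have := intermediate_value_Icc hT0 hcont
        have hmem : (0:ℝ) ∈ Set.Icc (g 0) (g T) := ⟨hg0, hgT.le⟩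
        obtain ⟨t0, ht0mem, ht0⟩ := this hmem
        exact ⟨t0, ht0mem, ht0⟩
      obtain ⟨ht00, _⟩ := ht0mem
      set s' : Multiset ℝ := s.map (· + t0) with hs'
      set a' : ℝ := a + t0 with ha'def
      have ha' : a' ∈ s' := Multiset.mem_map_of_mem _ ha
      have herase : (s.erase a).map (· + t0) = s'.erase a' :=
        Multiset.map_erase _ (add_left_injective t0) a s
      have hz : (s'.erase a').esymm k = 0 := by rw [← herase]; exact ht0
      have hcs' : Multiset.card s' = Multiset.card s := Multiset.card_map _ s
      have hs'pos : ∀ j, 1 ≤ j → j ≤ k + 1 → 0 < s'.esymm j :=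
        fun j h1 h2 => shift_pos s (k + 1) hpos hcard t0 ht00 j h1 h2
      have hprev : 0 < (s'.erase a').esymm k' := by
        refine ihk k' (by omega) s' a' ha' (fun j h1 h2 => hs'pos j h1 (by omega)) ?_
        rw [hcs']; omega
      have hcerase : Multiset.card (s'.erase a') = Multiset.card s - 1 := by
        rw [Multiset.card_erase_of_mem ha', hcs', Nat.pred_eq_sub_one]
      -- esymm (k+1) of the erased multiset is ≤ 0
      have hnext : (s'.erase a').esymm (k + 1) ≤ 0 := by
        rcases le_or_gt (k + 2) (Multiset.card s) with hbig | hsmall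
        · -- use Newton's inequality
          have hN := newton_aux (Multiset.card s - 1) (s'.erase a') hcerase k'
            (by omega)
          rw [show k' + 1 = k from rfl, show k' + 2 = k + 1 from rfl, hz] at hN
          simp only [zero_div, ne_eq] at hN
          have hC1 : (0:ℝ) < (((Multiset.card s - 1).choose k' : ℕ) : ℝ) := by
            exact_mod_cast Nat.choose_pos (by omega)
          have hC2 : (0:ℝ) < (((Multiset.card s - 1).choose (k+1) : ℕ) : ℝ) := by
            exact_mod_cast Nat.choose_pos (by omega)
          have hq : 0 < (s'.erase a').esymm k' / ((Multiset.card s - 1).choose k' : ℝ) :=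
            div_pos hprev hC1
          by_contra hEpos
          push_neg at hEpos
          have h1 : 0 < (s'.erase a').esymm (k + 1) / ((Multiset.card s - 1).choose (k+1) : ℝ) :=
            div_pos hEpos hC2
          have h2 := mul_pos hq h1
          simp only [zero_pow, ne_eq, OfNat.ofNat_ne_zero, not_false_eq_true] at hN
          linarith
        · have : Multiset.card (s'.erase a') < k + 1 := by omega
          rw [esymm_eq_zero this]
      have hfinal := hs'pos (k + 1) (by omega) (le_refl _)
      rw [esymm_erase ha' k, hz, mul_zero, add_zero] at hfinal
      linarith


lemma hasFDerivAt_S (n k : ℕ) (lam : Fin n → ℝ) :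
    HasFDerivAt (S n k)
      ((n.choose k : ℝ)⁻¹ • ∑ t ∈ Finset.univ.powersetCard k,
        ∑ i ∈ t, (∏ j ∈ t.erase i, lam j) • ContinuousLinearMap.proj (R := ℝ)
          (φ := fun _ : Fin n => ℝ) i) lam := by
  have hfun : S n k = fun x : Fin n → ℝ =>
      (n.choose k : ℝ)⁻¹ * (∑ t ∈ Finset.univ.powersetCard k, ∏ i ∈ t, x i) := by
    funext x
    rw [S, div_eq_inv_mul]
  rw [hfun]
  have hsum : HasFDerivAt
      (fun x : Fin n → ℝ => ∑ t ∈ Finset.univ.powersetCard k, ∏ i ∈ t, x i)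
      (∑ t ∈ Finset.univ.powersetCard k, ∑ i ∈ t, (∏ j ∈ t.erase i, lam j) •
        ContinuousLinearMap.proj (R := ℝ) (φ := fun _ : Fin n => ℝ) i) lam :=
    HasFDerivAt.fun_sum fun t _ => HasFDerivAt.finset_prod fun i _ =>
      (ContinuousLinearMap.proj (R := ℝ) (φ := fun _ : Fin n => ℝ) i).hasFDerivAt
  exact hsum.const_mul _

lemma fderiv_S_single (n k' : ℕ) (i0 : Fin n) (lam : Fin n → ℝ) :
    fderiv ℝ (S n (k' + 1)) lam (Pi.single i0 1) =
      (∑ u ∈ (Finset.univ.erase i0).powersetCard k', ∏ i ∈ u, lam i)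
        / (n.choose (k' + 1) : ℝ) := by
  classical
  rw [(hasFDerivAt_S n (k' + 1) lam).fderiv]
  rw [ContinuousLinearMap.smul_apply, ContinuousLinearMap.sum_apply]
  have heval : ∀ t : Finset (Fin n),
      (∑ i ∈ t, (∏ j ∈ t.erase i, lam j) • ContinuousLinearMap.proj (R := ℝ)
        (φ := fun _ : Fin n => ℝ) i) (Pi.single i0 1) =
      if i0 ∈ t then ∏ j ∈ t.erase i0, lam j else 0 := by
    intro t
    rw [ContinuousLinearMap.sum_apply]
    have : ∀ i ∈ t, ((∏ j ∈ t.erase i, lam j) • ContinuousLinearMap.proj (R := ℝ)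
        (φ := fun _ : Fin n => ℝ) i) (Pi.single i0 1) =
        if i = i0 then ∏ j ∈ t.erase i, lam j else 0 := by
      intro i _
      rw [ContinuousLinearMap.smul_apply, ContinuousLinearMap.proj_apply]
      by_cases h : i = i0
      · subst h; simp
      · simp [Pi.single_apply, h]
    rw [Finset.sum_congr rfl this, Finset.sum_ite_eq' t i0]
  rw [Finset.sum_congr rfl fun t _ => heval t]
  -- now the combinatorial identity
  have hsplit : ∑ t ∈ Finset.univ.powersetCard (k' + 1),
      (if i0 ∈ t then ∏ j ∈ t.erase i0, lam j else 0) =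
      ∑ u ∈ (Finset.univ.erase i0).powersetCard k', ∏ i ∈ u, lam i := by
    have huniv : (Finset.univ : Finset (Fin n)) = insert i0 (Finset.univ.erase i0) :=
      (Finset.insert_erase (Finset.mem_univ i0)).symm
    conv_lhs => rw [huniv, Finset.powersetCard_succ_insert (Finset.notMem_erase i0 _)]
    rw [Finset.sum_union]
    · have h1 : ∑ t ∈ (Finset.univ.erase i0).powersetCard (k' + 1),
          (if i0 ∈ t then ∏ j ∈ t.erase i0, lam j else 0) = 0 := by
        refine Finset.sum_eq_zero fun t ht => ?_
        have : i0 ∉ t := fun hmem => Finset.notMem_erase i0 _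
          ((Finset.mem_powersetCard.mp ht).1 hmem)
        simp [this]
      rw [h1, zero_add]
      rw [Finset.sum_image]
      · refine Finset.sum_congr rfl fun u hu => ?_
        have hi0u : i0 ∉ u := fun hmem => Finset.notMem_erase i0 _
          ((Finset.mem_powersetCard.mp hu).1 hmem)
        rw [if_pos (Finset.mem_insert_self i0 u), Finset.erase_insert hi0u]
      · intro u hu v hv huv
        have hi0u : i0 ∉ u := fun hmem => Finset.notMem_erase i0 _
          ((Finset.mem_powersetCard.mp hu).1 hmem)
        have hi0v : i0 ∉ v := fun hmem => Finset.notMem_erase i0 _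
          ((Finset.mem_powersetCard.mp hv).1 hmem)
        rw [← Finset.erase_insert hi0u, ← Finset.erase_insert hi0v, huv]
    · rw [Finset.disjoint_left]
      intro t ht1 ht2
      have h1 : i0 ∉ t := fun hmem => Finset.notMem_erase i0 _
        ((Finset.mem_powersetCard.mp ht1).1 hmem)
      obtain ⟨u, hu, rfl⟩ := Finset.mem_image.mp ht2
      exact h1 (Finset.mem_insert_self i0 u)
  rw [hsplit, smul_eq_mul, div_eq_inv_mul]


end NewtonAux

open NewtonAux in
theorem lam1_mul_partial_Sk_ge (n k : ℕ) (hn : 0 < n) (hk1 : 1 ≤ k) (hkn : k ≤ n)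
    (lam : Fin n → ℝ) (hlam : lam ∈ Gamma n k)
    (hsort : ∀ i j : Fin n, i ≤ j → lam j ≤ lam i) :
    lam ⟨0, hn⟩ * fderiv ℝ (S n k) lam (Pi.single ⟨0, hn⟩ 1) ≥
      ((k : ℝ) / n) * S n k lam := by
  classical
  obtain ⟨k', rfl⟩ : ∃ k'', k = k'' + 1 := ⟨k - 1, by omega⟩
  set k := k' + 1 with hkdef
  set i0 : Fin n := ⟨0, hn⟩ with hi0
  set sAll : Multiset ℝ := Finset.univ.val.map lam with hsAlldef
  set μ : Multiset ℝ := (Finset.univ.erase i0).val.map lam with hμdef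
  have hcardAll : Multiset.card sAll = n := by
    rw [hsAlldef, Multiset.card_map]
    exact Finset.card_fin n
  have hcons : sAll = lam i0 ::ₘ μ := by
    rw [hsAlldef, hμdef, Finset.erase_val, ← Multiset.map_cons,
      Multiset.cons_erase (Finset.mem_univ i0)]
  have hcardμ : Multiset.card μ = n - 1 := by
    have := congrArg Multiset.card hcons
    rw [hcardAll, Multiset.card_cons] at this
    omega
  have hS : ∀ j, S n j lam = sAll.esymm j / (n.choose j : ℝ) := by
    intro j
    rw [S, hsAlldef, Finset.esymm_map_val]
  have hGamAll : ∀ j, 1 ≤ j → j ≤ k → 0 < sAll.esymm j := by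
    intro j h1 h2
    have hpos := hlam j h1 h2
    rw [hS j] at hpos
    have hC : (0:ℝ) < (n.choose j : ℝ) := by
      exact_mod_cast Nat.choose_pos (le_trans h2 hkn)
    have := mul_pos hpos hC
    rwa [div_mul_cancel₀ _ (ne_of_gt hC)] at this
  have hmemAll : lam i0 ∈ sAll := by rw [hcons]; exact Multiset.mem_cons_self _ _
  have hμerase : sAll.erase (lam i0) = μ := by rw [hcons, Multiset.erase_cons_head]
  have hμpos : ∀ j, j ≤ k' → 0 < μ.esymm j := by
    intro j hj
    rw [← hμerase]
    exact gamma_erase_pos j sAll (lam i0) hmemAll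
      (fun i h1 h2 => hGamAll i h1 (by omega)) (by omega)
  have hile : ∀ i : Fin n, lam i ≤ lam i0 := by
    intro i
    exact hsort i0 i (by simp [hi0, Fin.le_def])
  have hl0 : 0 < lam i0 := by
    have h1 := hGamAll 1 le_rfl (by omega)
    rw [esymm_one'] at h1
    have h2 : sAll.sum ≤ (Multiset.card sAll) • lam i0 := by
      refine Multiset.sum_le_card_nsmul _ _ ?_
      intro x hx
      rw [hsAlldef] at hx
      obtain ⟨i, _, rfl⟩ := Multiset.mem_map.mp hx
      exact hile i
    rw [hcardAll, nsmul_eq_mul] at h2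
    by_contra hcon
    push_neg at hcon
    have : (n:ℝ) * lam i0 ≤ 0 := by
      apply mul_nonpos_of_nonneg_of_nonpos <;> [positivity; exact hcon]
    linarith
  have hμmax : ∀ x ∈ μ, x ≤ lam i0 := by
    intro x hx
    rw [hμdef] at hx
    obtain ⟨i, _, rfl⟩ := Multiset.mem_map.mp hx
    exact hile i
  -- MAIN inequality : k * E_k(μ) ≤ (n - k) * (λ₁ * E_{k-1}(μ))
  have hMAIN : (k:ℝ) * μ.esymm k ≤ ((n:ℝ) - k) * (lam i0 * μ.esymm k') := by
    rcases eq_or_lt_of_le hkn with heq | hlt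
    · have hz : μ.esymm k = 0 := esymm_eq_zero (by omega)
      have hz2 : (n:ℝ) - k = 0 := by rw [heq]; ring
      rw [hz, hz2]; simp
    · have hnk1 : (1:ℝ) ≤ (n:ℝ) - k := by
        have : (k:ℝ) + 1 ≤ n := by exact_mod_cast hlt
        linarith
      have hEk' := hμpos k' le_rfl
      rcases le_or_gt (μ.esymm k) 0 with hneg | hposk
      · have hr : 0 ≤ ((n:ℝ) - k) * (lam i0 * μ.esymm k') := by positivity
        have hl : (k:ℝ) * μ.esymm k ≤ 0 :=
          mul_nonpos_of_nonneg_of_nonpos (by positivity) hneg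
        linarith
      · -- Maclaurin chain
        set P : ℕ → ℝ := fun j => μ.esymm j / ((n-1).choose j : ℝ) with hP
        have hPpos : ∀ j, j ≤ k' → 0 < P j := by
          intro j hj
          have hC : (0:ℝ) < ((n-1).choose j : ℝ) := by
            exact_mod_cast Nat.choose_pos (by omega)
          exact div_pos (hμpos j hj) hC
        have hMC : ∀ j, j ≤ k' → P (j + 1) ≤ P 1 * P j := by
          intro j
          induction j with
          | zero =>
            intro _
            have : P 0 = 1 := by rw [hP]; simp [esymm_zero']
            rw [this, mul_one]
          | succ j ih =>
            intro hj
            have hN : P j * P (j + 2) ≤ P (j + 1) ^ 2 :=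
              newton_aux (n-1) μ hcardμ j (by omega)
            have hIH := ih (by omega)
            have hpj : 0 < P j := hPpos j (by omega)
            have hpj1 : 0 < P (j+1) := hPpos (j+1) hj
            have h3 : P j * P (j+2) ≤ P j * (P 1 * P (j+1)) := by nlinarith [hN, hIH, hpj1]
            exact le_of_mul_le_mul_left h3 hpj
        have hfinal := hMC k' le_rfl
        have hP1 : P 1 ≤ lam i0 := by
          rw [hP]
          simp only [Nat.choose_one_right]
          have hsum : μ.sum ≤ ((n:ℝ) - 1) * lam i0 := by
            have := Multiset.sum_le_card_nsmul μ (lam i0) hμmax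
            rw [hcardμ, nsmul_eq_mul] at this
            have hcast : ((n - 1 : ℕ) : ℝ) = (n:ℝ) - 1 := by
              push_cast [Nat.cast_sub hn]; ring
            rwa [hcast] at this
          rw [esymm_one']
          have hn1R : (0:ℝ) < ((n - 1 : ℕ) : ℝ) := by
            have : 1 ≤ n - 1 := by omega
            exact_mod_cast by omega
          rw [div_le_iff₀ hn1R]
          have hcast : ((n - 1 : ℕ) : ℝ) = (n:ℝ) - 1 := by
            push_cast [Nat.cast_sub hn]; ring
          rw [hcast]
          nlinarith [hsum, hl0]
        have hPk' := hPpos k' le_rfl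
        have hstep : P k ≤ lam i0 * P k' := by
          calc P k = P (k' + 1) := by rw [hkdef]
          _ ≤ P 1 * P k' := hfinal
          _ ≤ lam i0 * P k' := by nlinarith [hP1, hPk']
        -- convert to esymm form
        have hCk : (0:ℝ) < ((n-1).choose k : ℝ) := by
          exact_mod_cast Nat.choose_pos (by omega)
        have hCk' : (0:ℝ) < ((n-1).choose k' : ℝ) := by
          exact_mod_cast Nat.choose_pos (by omega)
        have hchoose : (k:ℝ) * ((n-1).choose k : ℝ) = ((n:ℝ) - k) * ((n-1).choose k' : ℝ) := by
          have h1 : (n-1).choose (k' + 1) * (k' + 1) = (n-1).choose k' * ((n-1) - k') :=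
            Nat.choose_succ_right_eq (n-1) k'
          have h2 := congrArg (fun x : ℕ => (x:ℝ)) h1
          push_cast [Nat.cast_sub (show k' ≤ n - 1 by omega), Nat.cast_sub hn] at h2
          rw [hkdef]
          push_cast
          linarith [h2]
        rw [hP] at hstep
        simp only at hstep
        rw [div_le_iff₀ hCk] at hstep
        -- hstep : μ.esymm k ≤ lam i0 * (μ.esymm k' / C(n-1,k')) * C(n-1,k)
        have hkpos : (0:ℝ) < (k:ℝ) := by positivity
        have key : (k:ℝ) * μ.esymm k ≤ (k:ℝ) * (lam i0 * (μ.esymm k' / ((n-1).choose k' : ℝ)) * ((n-1).choose k : ℝ)) := by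
          nlinarith [hstep, hkpos]
        calc (k:ℝ) * μ.esymm k
            ≤ (k:ℝ) * (lam i0 * (μ.esymm k' / ((n-1).choose k' : ℝ)) * ((n-1).choose k : ℝ)) := key
          _ = (lam i0 * μ.esymm k') * ((k:ℝ) * ((n-1).choose k : ℝ)) / ((n-1).choose k' : ℝ) := by
              field_simp
          _ = (lam i0 * μ.esymm k') * (((n:ℝ) - k) * ((n-1).choose k' : ℝ)) / ((n-1).choose k' : ℝ) := by
              rw [hchoose]
          _ = ((n:ℝ) - k) * (lam i0 * μ.esymm k') := by
              field_simp
  -- conclude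
  rw [ge_iff_le, fderiv_S_single n k' i0 lam, hS k]
  have hEk' : (∑ u ∈ (Finset.univ.erase i0).powersetCard k', ∏ i ∈ u, lam i) = μ.esymm k' :=
    (Finset.esymm_map_val lam _ k').symm
  rw [hEk']
  have hEk : sAll.esymm k = μ.esymm k + lam i0 * μ.esymm k' := by
    rw [hcons, hkdef, esymm_cons]
  rw [hEk]
  have hC : (0:ℝ) < (n.choose k : ℝ) := by exact_mod_cast Nat.choose_pos hkn
  have hnpos : (0:ℝ) < (n:ℝ) := by exact_mod_cast hn
  have h1 : (k:ℝ)/(n:ℝ) * ((μ.esymm k + lam i0 * μ.esymm k')/(n.choose k:ℝ)) =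
      ((k:ℝ) * (μ.esymm k + lam i0 * μ.esymm k')) / ((n:ℝ) * (n.choose k:ℝ)) := by
    field_simp
  have h2 : lam i0 * (μ.esymm k'/(n.choose k:ℝ)) =
      ((n:ℝ) * (lam i0 * μ.esymm k')) / ((n:ℝ)*(n.choose k:ℝ)) := by
    field_simp
  rw [h1, h2]
  rw [div_le_div_iff_of_pos_right (by positivity)]
  nlinarith [hMAIN]
end
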